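/- arXiv:2210.11212 — 3 statements merged into one kernel-verified Lean document; each statement's English description precedes it below -/
import Mathlib

section
/- Suppose the digraph of W is strongly connected and structurally balanced with gauge g for the full node set. Then for every closed-loop trajectory (x, ς, s) of the prescribed-time sliding mode protocol with data (ρ1, ρ2, T_r, T_s, μ1, μ2, μ3, δ, d), there exists c ∈ ℝ such that x t k = c · g k for all nodes k and all t ≥ T_r + T_s (prescribed-time bipartite consensus within the preassigned time T_r + T_s despite the disturbances). -/
open Matrix

/-- Time-varying gain: `μ_T(t) = κ/(T − t)` for `0 ≤ t < T`, `0` otherwise. -/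
noncomputable def gain (κ T t : ℝ) : ℝ := if 0 ≤ t ∧ t < T then κ / (T - t) else 0

/-- Signed Laplacian `L = D − W` with `D k k = ∑_l |W k l|`. -/
noncomputable def sLap {N : ℕ} (W : Matrix (Fin N) (Fin N) ℝ) : Matrix (Fin N) (Fin N) ℝ :=
  Matrix.diagonal (fun k => ∑ l, |W k l|) - W

/-- Node `i` reaches node `j`: reflexive–transitive closure of the edge relation
`E i j ↔ W j i ≠ 0`. -/
def Reaches {N : ℕ} (W : Matrix (Fin N) (Fin N) ℝ) : Fin N → Fin N → Prop :=
  Relation.ReflTransGen (fun i j => W j i ≠ 0)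

def StronglyConnected {N : ℕ} (W : Matrix (Fin N) (Fin N) ℝ) : Prop :=
  ∀ i j, Reaches W i j

def QuasiStronglyConnected {N : ℕ} (W : Matrix (Fin N) (Fin N) ℝ) : Prop :=
  ∃ r, ∀ j, Reaches W r j

def WeaklyConnected {N : ℕ} (W : Matrix (Fin N) (Fin N) ℝ) : Prop :=
  ∀ i j, Relation.ReflTransGen (fun a b => W b a ≠ 0 ∨ W a b ≠ 0) i j

/-- `k` is a leader: every node reaching `k` is reached back by `k`. -/
def IsLeader {N : ℕ} (W : Matrix (Fin N) (Fin N) ℝ) (k : Fin N) : Prop :=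
  ∀ j, Reaches W j k → Reaches W k j

/-- Closed strong component of a leader `k`. -/
def CSC {N : ℕ} (W : Matrix (Fin N) (Fin N) ℝ) (k : Fin N) : Set (Fin N) :=
  {j | Reaches W j k ∧ Reaches W k j}

/-- A gauge for a node set `S`. -/
def IsGauge {N : ℕ} (W : Matrix (Fin N) (Fin N) ℝ) (S : Set (Fin N)) (g : Fin N → ℝ) : Prop :=
  (∀ k ∈ S, g k = 1 ∨ g k = -1) ∧ ∀ k ∈ S, ∀ l ∈ S, g k * W k l * g l = |W k l|

/-- Nominal prescribed-time trajectory of the protocol (4). -/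
def NominalTraj {N : ℕ} (W : Matrix (Fin N) (Fin N) ℝ) (κ ρ1 ρ2 T1 : ℝ)
    (X : ℝ → Fin N → ℝ) : Prop :=
  Continuous X ∧
  ∀ t : ℝ, 0 ≤ t → t ≠ T1 →
    HasDerivAt X ((-(ρ1 + ρ2 * gain κ T1 t)) • (sLap W).mulVec (X t)) t

/-- Closed-loop trajectory of the prescribed-time sliding mode protocol (47)-(48):
`x` states, `ς` auxiliary variable (σ = x + ς), `s` a Filippov selection of sign(σ),
`d` the disturbances. -/
def SMCTraj {N : ℕ} (W : Matrix (Fin N) (Fin N) ℝ) (κ ρ1 ρ2 Tr Ts μ1 μ2 μ3 : ℝ)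
    (d x ς s : ℝ → Fin N → ℝ) : Prop :=
  Continuous x ∧ Continuous ς ∧
  (∀ t k, |s t k| ≤ 1 ∧ s t k * (x t k + ς t k) = |x t k + ς t k|) ∧
  ∀ t : ℝ, 0 ≤ t → t ≠ Tr → t ≠ Tr + Ts →
    (HasDerivAt ς ((ρ1 + ρ2 * gain κ (Tr + Ts) t) • (sLap W).mulVec (x t)) t ∧
     ∀ k, HasDerivAt (fun τ => x τ k)
       (-(ρ1 + ρ2 * gain κ (Tr + Ts) t) * ((sLap W).mulVec (x t)) k
         - μ1 * s t k - (μ2 + μ3 * gain κ Tr t) * (x t k + ς t k) + d t k) t)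

lemma blowup_aux {φ h : ℝ → ℝ} {T t0 a B : ℝ} (ha : 0 < a) (ht0 : t0 < T)
    (hc : ContinuousAt φ T)
    (hφ : ∀ t ∈ Set.Ico t0 T, HasDerivAt φ (h t) t)
    (hh : ∀ t ∈ Set.Ico t0 T, h t ≤ -a / (T - t) + B) : False := by
  set F : ℝ → ℝ := fun t => φ t - B * t - a * Real.log (T - t) with hF
  have hFd : ∀ t ∈ Set.Ico t0 T, HasDerivAt F (h t - B + a / (T - t)) t := by
    intro t ht
    have hTt : T - t ≠ 0 := by have := ht.2; intro h'; linarith [sub_eq_zero.mp h']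
    have hlog : HasDerivAt (fun t => Real.log (T - t)) (-(T - t)⁻¹) t := by
      have hsub : HasDerivAt (fun t : ℝ => T - t) (-1) t := by
        simpa using (hasDerivAt_id t).const_sub T
      have := (Real.hasDerivAt_log hTt).comp t hsub
      exact this.congr_deriv (by ring)
    have := ((hφ t ht).sub ((hasDerivAt_id t).const_mul B)).sub (hlog.const_mul a)
    exact this.congr_deriv (by ring)
  have hanti : AntitoneOn F (Set.Ico t0 T) := by
    apply antitoneOn_of_deriv_nonpos (convex_Ico t0 T)
    · intro t ht
      exact ((hFd t ht).continuousAt).continuousWithinAt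
    · intro t ht
      rw [interior_Ico] at ht
      exact (hFd t ⟨le_of_lt ht.1, ht.2⟩).differentiableAt.differentiableWithinAt
    · intro t ht
      rw [interior_Ico] at ht
      have ht' : t ∈ Set.Ico t0 T := ⟨le_of_lt ht.1, ht.2⟩
      rw [(hFd t ht').deriv]
      have h1 := hh t ht'
      have h2 : 0 < T - t := by linarith [ht.2]
      have : -a / (T - t) + a / (T - t) = 0 := by ring
      nlinarith [h1]
  -- continuity at T gives ε
  obtain ⟨ε, hε, hball⟩ := Metric.continuousAt_iff.mp hc 1 one_pos
  set C : ℝ := |B| * (|t0| + |T|) with hC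
  set M : ℝ := (φ T - 2 - F t0 - C) / a with hM
  set u : ℝ := min (min (ε / 2) ((T - t0) / 2)) (Real.exp M) with hu
  have hu0 : 0 < u := by
    apply lt_min (lt_min (by linarith) (by linarith))
    exact Real.exp_pos M
  set t : ℝ := T - u with htdef
  have htmem : t ∈ Set.Ico t0 T := by
    constructor
    · have : u ≤ (T - t0) / 2 := (min_le_left _ _).trans (min_le_right _ _)
      simp only [htdef]; linarith
    · simp only [htdef]; linarith
  have hnear : |φ t - φ T| < 1 := by
    have : dist t T < ε := by
      simp only [htdef, Real.dist_eq]
      have : u ≤ ε / 2 := (min_le_left _ _).trans (min_le_left _ _)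
      rw [abs_of_nonpos (by linarith)]
      linarith
    simpa [Real.dist_eq] using hball this
  have hlogu : Real.log (T - t) ≤ M := by
    have : T - t = u := by simp [htdef]
    rw [this]
    exact (Real.log_le_iff_le_exp hu0).mpr (min_le_right _ _)
  have hFle : F t ≤ F t0 := hanti (Set.left_mem_Ico.mpr ht0) htmem htmem.1
  have hBt : B * t ≤ C := by
    have h1 : t0 ≤ t := htmem.1
    have h2 : t ≤ T := le_of_lt htmem.2
    have habs : |t| ≤ |t0| + |T| := by
      rw [abs_le]
      constructor
      · linarith [neg_abs_le t0, abs_nonneg T]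
      · linarith [le_abs_self T, abs_nonneg t0]
    calc B * t ≤ |B * t| := le_abs_self _
      _ = |B| * |t| := abs_mul B t
      _ ≤ |B| * (|t0| + |T|) := by
          exact mul_le_mul_of_nonneg_left habs (abs_nonneg B)
  have haM : a * M = φ T - 2 - F t0 - C := by
    rw [hM]; field_simp
  have : φ t ≤ φ T - 2 := by
    have h1 : φ t - B * t - a * Real.log (T - t) ≤ F t0 := hFle
    have h2 : a * Real.log (T - t) ≤ a * M := mul_le_mul_of_nonneg_left hlogu (le_of_lt ha)
    linarith
  have := abs_lt.mp hnear
  linarith [this.1]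

lemma kernel_lemma {N : ℕ} (hN : 0 < N) (W : Matrix (Fin N) (Fin N) ℝ)
    (hSC : StronglyConnected W) (g : Fin N → ℝ) (hg : IsGauge W Set.univ g)
    (v : Fin N → ℝ) (hv : (sLap W).mulVec v = 0) :
    ∃ c : ℝ, ∀ k, v k = c * g k := by
  have hgsq : ∀ k, g k * g k = 1 := by
    intro k
    rcases hg.1 k (Set.mem_univ k) with h | h <;> rw [h] <;> ring
  set u : Fin N → ℝ := fun k => g k * v k with hu
  have hgW : ∀ k l, g k * W k l = |W k l| * g l := by
    intro k l
    have h := hg.2 k (Set.mem_univ k) l (Set.mem_univ l)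
    have := congrArg (· * g l) h
    calc g k * W k l = g k * W k l * (g l * g l) := by rw [hgsq]; ring
      _ = |W k l| * g l := by rw [← mul_assoc, h]
  have key : ∀ k, ∑ l, |W k l| * (u k - u l) = 0 := by
    intro k
    have h0 : (sLap W).mulVec v k = 0 := by rw [hv]; rfl
    have hdiagsum : ∑ j, Matrix.diagonal (fun k => ∑ l, |W k l|) k j * v j
        = (∑ l, |W k l|) * v k := by
      rw [Finset.sum_eq_single k]
      · simp [Matrix.diagonal]
      · intro b _ hb
        rw [Matrix.diagonal_apply_ne _ (Ne.symm hb), zero_mul]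
      · simp
    have h1 : (∑ l, |W k l|) * v k - ∑ j, W k j * v j = 0 := by
      have : (sLap W).mulVec v k
          = ∑ j, ((Matrix.diagonal (fun k => ∑ l, |W k l|)) k j - W k j) * v j := by
        simp [sLap, Matrix.mulVec, dotProduct, Matrix.sub_apply]
      rw [this] at h0
      simp only [sub_mul, Finset.sum_sub_distrib] at h0
      rw [← hdiagsum]
      exact h0
    have h4 : g k * (∑ j, W k j * v j) = ∑ j, |W k j| * u j := by
      rw [Finset.mul_sum]
      apply Finset.sum_congr rfl
      intro j _
      calc g k * (W k j * v j) = (g k * W k j) * v j := by ring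
        _ = |W k j| * (g j * v j) := by rw [hgW]; ring
    have h5 : g k * ((∑ l, |W k l|) * v k) = (∑ l, |W k l|) * u k := by
      simp only [hu]; ring
    have h2 : (∑ l, |W k l|) * u k - ∑ j, |W k j| * u j = 0 := by
      have h3 : g k * ((∑ l, |W k l|) * v k) - g k * (∑ j, W k j * v j) = 0 := by
        rw [← mul_sub, h1, mul_zero]
      rw [← h4, ← h5]; exact h3
    rw [Finset.sum_mul] at h2
    simp only [mul_sub, Finset.sum_sub_distrib]
    exact h2
  -- max argument
  have : Nonempty (Fin N) := ⟨⟨0, hN⟩⟩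
  obtain ⟨k0, -, hk0⟩ := Finset.exists_max_image Finset.univ u ⟨⟨0, hN⟩, Finset.mem_univ _⟩
  have hclosed : ∀ c, u c = u k0 → ∀ l, W c l ≠ 0 → u l = u k0 := by
    intro c hc l hl
    have hnn : ∀ j ∈ Finset.univ, 0 ≤ |W c j| * (u c - u j) := by
      intro j _
      apply mul_nonneg (abs_nonneg _)
      have := hk0 j (Finset.mem_univ j)
      rw [hc]; linarith
    have hz := (Finset.sum_eq_zero_iff_of_nonneg hnn).mp (key c) l (Finset.mem_univ l)
    rcases mul_eq_zero.mp hz with h | h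
    · exact absurd (abs_eq_zero.mp h) hl
    · rw [hc] at h; linarith [hk0 l (Finset.mem_univ l)]
  have hall : ∀ j, u j = u k0 := by
    intro j
    have hreach : Relation.ReflTransGen (fun i j => W j i ≠ 0) j k0 := hSC j k0
    induction hreach using Relation.ReflTransGen.head_induction_on with
    | refl => rfl
    | head h' _ ih => exact hclosed _ ih _ h'
  refine ⟨u k0, fun k => ?_⟩
  have : v k = g k * u k := by
    simp only [hu]
    rw [← mul_assoc, hgsq, one_mul]
  rw [this, hall k, mul_comm]

set_option maxHeartbeats 2000000 in
theorem smc_prescribed_time_bipartite_consensus_strong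
    {N : ℕ} (hN : 2 ≤ N) (W : Matrix (Fin N) (Fin N) ℝ)
    (hdiag : ∀ k, W k k = 0)
    (hSC : StronglyConnected W)
    (g : Fin N → ℝ) (hg : IsGauge W Set.univ g)
    (κ ρ1 ρ2 Tr Ts μ1 μ2 μ3 δ : ℝ) (hκ : 2 < κ)
    (hρ1 : 0 < ρ1) (hρ2 : 0 < ρ2) (hTr : 0 < Tr) (hTs : 0 < Ts)
    (hμ2 : 0 < μ2) (hμ3 : 0 < μ3) (hδ : 0 ≤ δ) (hμ1 : δ < μ1)
    (d : ℝ → Fin N → ℝ) (hd : ∀ t : ℝ, 0 ≤ t → ∀ k, |d t k| ≤ δ)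
    (x ς s : ℝ → Fin N → ℝ)
    (htraj : SMCTraj W κ ρ1 ρ2 Tr Ts μ1 μ2 μ3 d x ς s) :
    ∃ c : ℝ, ∀ t : ℝ, Tr + Ts ≤ t → ∀ k, x t k = c * g k := by
  obtain ⟨hx, hς, hs, hode⟩ := htraj
  set T : ℝ := Tr + Ts with hTdef
  have hT : Tr < T := by rw [hTdef]; linarith
  have hT0 : 0 < T := lt_trans hTr hT
  have hκ0 : (0:ℝ) < κ := by linarith
  -- component derivative of ς
  have hςk : ∀ t : ℝ, 0 ≤ t → t ≠ Tr → t ≠ T → ∀ k,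
      HasDerivAt (fun τ => ς τ k) ((ρ1 + ρ2 * gain κ T t) * ((sLap W).mulVec (x t)) k) t := by
    intro t h0 h1 h2 k
    have := hasDerivAt_pi.mp (hode t h0 h1 h2).1 k
    simpa using this
  -- derivative of σ components
  have hσk : ∀ t : ℝ, 0 ≤ t → t ≠ Tr → t ≠ T → ∀ k,
      HasDerivAt (fun τ => x τ k + ς τ k)
        (-(μ1 * s t k) - (μ2 + μ3 * gain κ Tr t) * (x t k + ς t k) + d t k) t := by
    intro t h0 h1 h2 k
    have h := ((hode t h0 h1 h2).2 k).fun_add (hςk t h0 h1 h2 k)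
    exact h.congr_deriv (by ring)
  have hσc : ∀ k, Continuous (fun t => x t k + ς t k) := fun k =>
    ((continuous_apply k).comp hx).add ((continuous_apply k).comp hς)
  -- STEP 1 : σ (Tr) = 0
  have hσTr : ∀ k, x Tr k + ς Tr k = 0 := by
    intro k
    by_contra hne
    set a : ℝ := x Tr k + ς Tr k with hadef
    clear_value a
    have ha2 : 0 < a ^ 2 := lt_of_le_of_ne (sq_nonneg a) (Ne.symm (pow_ne_zero 2 hne))
    have hφc : Continuous (fun t => (x t k + ς t k) ^ 2) := (hσc k).pow 2
    have hev : ∀ᶠ t in nhds Tr, a ^ 2 / 2 < (x t k + ς t k) ^ 2 :=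
      (hφc.continuousAt).eventually (eventually_gt_nhds
        (by show a ^ 2 / 2 < (x Tr k + ς Tr k) ^ 2; rw [← hadef]; linarith))
    obtain ⟨ε, hε, hball⟩ := Metric.eventually_nhds_iff.mp hev
    set t0 : ℝ := max (Tr - ε / 2) (Tr / 2) with ht0def
    have ht0Tr : t0 < Tr := max_lt (by linarith) (by linarith)
    have ht00 : 0 < t0 := lt_of_lt_of_le (half_pos hTr) (le_max_right _ _)
    refine blowup_aux (φ := fun t => (x t k + ς t k) ^ 2)
      (h := fun t => 2 * (x t k + ς t k) *
        (-(μ1 * s t k) - (μ2 + μ3 * gain κ Tr t) * (x t k + ς t k) + d t k))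
      (T := Tr) (t0 := t0) (a := μ3 * κ * a ^ 2) (B := 0)
      (by positivity) ht0Tr hφc.continuousAt ?_ ?_
    · intro t ht
      have h0 : (0:ℝ) ≤ t := le_of_lt (lt_of_lt_of_le ht00 ht.1)
      have h1 : t ≠ Tr := ne_of_lt ht.2
      have h2 : t ≠ T := ne_of_lt (lt_trans ht.2 hT)
      have := (hσk t h0 h1 h2 k).fun_pow 2
      exact this.congr_deriv (by ring)
    · intro t ht
      have h0 : (0:ℝ) ≤ t := le_of_lt (lt_of_lt_of_le ht00 ht.1)
      have hgain : gain κ Tr t = κ * (Tr - t)⁻¹ := by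
        rw [gain, if_pos ⟨h0, ht.2⟩, div_eq_mul_inv]
      have hP : 0 < (Tr - t)⁻¹ := by
        have : 0 < Tr - t := by linarith [ht.2]
        positivity
      have hσ2 : a ^ 2 / 2 < (x t k + ς t k) ^ 2 := by
        apply hball
        rw [Real.dist_eq, abs_of_nonpos (by linarith [ht.2])]
        have : Tr - ε / 2 ≤ t0 := le_max_left _ _
        have := ht.1
        linarith
      have hss : s t k * (x t k + ς t k) = |x t k + ς t k| := (hs t k).2
      have hdtk : |d t k| ≤ δ := hd t h0 k
      have habs : d t k * (x t k + ς t k) ≤ δ * |x t k + ς t k| := by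
        calc d t k * (x t k + ς t k) ≤ |d t k * (x t k + ς t k)| := le_abs_self _
          _ = |d t k| * |x t k + ς t k| := abs_mul _ _
          _ ≤ δ * |x t k + ς t k| := mul_le_mul_of_nonneg_right hdtk (abs_nonneg _)
      have h2σ : a ^ 2 ≤ 2 * (x t k + ς t k) ^ 2 := by nlinarith [hσ2]
      have hA : 0 ≤ μ3 * κ * (Tr - t)⁻¹ * (2 * (x t k + ς t k) ^ 2 - a ^ 2) := by
        apply mul_nonneg (by positivity)
        linarith
      simp only [hgain, div_eq_mul_inv]
      nlinarith [abs_nonneg (x t k + ς t k), sq_nonneg (x t k + ς t k),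
        mul_nonneg hμ2.le (sq_nonneg (x t k + ς t k)), hss, habs, hA,
        mul_nonneg (abs_nonneg (x t k + ς t k)) (le_of_lt (lt_of_le_of_lt hδ hμ1))]
  -- STEP 2 : σ ≡ 0 on [Tr, ∞)
  have hσ0 : ∀ t : ℝ, Tr ≤ t → ∀ k, x t k + ς t k = 0 := by
    have key : ∀ k, ∀ t : ℝ, Tr ≤ t → (x t k + ς t k) ^ 2 = 0 := by
      intro k
      have hyc : Continuous (fun t => (x t k + ς t k) ^ 2) := (hσc k).pow 2
      have hynn : ∀ t : ℝ, 0 ≤ (x t k + ς t k) ^ 2 := fun t => sq_nonneg _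
      have hder : ∀ t : ℝ, Tr < t → t ≠ T → HasDerivAt (fun t => (x t k + ς t k) ^ 2)
          (2 * (x t k + ς t k) * (-(μ1 * s t k) - μ2 * (x t k + ς t k) + d t k)) t := by
        intro t ht hne
        have h0 : (0:ℝ) ≤ t := le_of_lt (lt_trans hTr ht)
        have hgain : gain κ Tr t = 0 := by
          rw [gain, if_neg]; rintro ⟨-, h⟩; exact absurd h (not_lt.mpr ht.le)
        have := (hσk t h0 (ne_of_gt ht) hne k).fun_pow 2
        rw [hgain] at this
        exact this.congr_deriv (by ring)
      have hdle : ∀ t : ℝ, Tr < t → t ≠ T →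
          2 * (x t k + ς t k) * (-(μ1 * s t k) - μ2 * (x t k + ς t k) + d t k) ≤ 0 := by
        intro t ht hne
        have h0 : (0:ℝ) ≤ t := le_of_lt (lt_trans hTr ht)
        have hss := (hs t k).2
        have habs : d t k * (x t k + ς t k) ≤ δ * |x t k + ς t k| := by
          calc d t k * (x t k + ς t k) ≤ |d t k * (x t k + ς t k)| := le_abs_self _
            _ = |d t k| * |x t k + ς t k| := abs_mul _ _
            _ ≤ δ * |x t k + ς t k| := mul_le_mul_of_nonneg_right (hd t h0 k) (abs_nonneg _)
        nlinarith [abs_nonneg (x t k + ς t k), sq_nonneg (x t k + ς t k),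
          mul_nonneg hμ2.le (sq_nonneg (x t k + ς t k)), hss, habs]
      have hanti1 : AntitoneOn (fun t => (x t k + ς t k) ^ 2) (Set.Icc Tr T) := by
        apply antitoneOn_of_deriv_nonpos (convex_Icc Tr T) hyc.continuousOn
        · intro t ht
          rw [interior_Icc] at ht
          exact (hder t ht.1 (ne_of_lt ht.2)).differentiableAt.differentiableWithinAt
        · intro t ht
          rw [interior_Icc] at ht
          rw [(hder t ht.1 (ne_of_lt ht.2)).deriv]
          exact hdle t ht.1 (ne_of_lt ht.2)
      have hanti2 : AntitoneOn (fun t => (x t k + ς t k) ^ 2) (Set.Ici T) := by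
        apply antitoneOn_of_deriv_nonpos (convex_Ici T) hyc.continuousOn
        · intro t ht
          rw [interior_Ici] at ht
          exact (hder t (lt_trans hT ht) (ne_of_gt ht)).differentiableAt.differentiableWithinAt
        · intro t ht
          rw [interior_Ici] at ht
          rw [(hder t (lt_trans hT ht) (ne_of_gt ht)).deriv]
          exact hdle t (lt_trans hT ht) (ne_of_gt ht)
      have hyTr : (x Tr k + ς Tr k) ^ 2 = 0 := by rw [hσTr k]; ring
      have hIcc : ∀ t : ℝ, Tr ≤ t → t ≤ T → (x t k + ς t k) ^ 2 = 0 := by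
        intro t h1 h2
        have h3 := hanti1 (Set.left_mem_Icc.mpr hT.le) ⟨h1, h2⟩ h1
        simp only at h3
        rw [hyTr] at h3
        exact le_antisymm h3 (hynn t)
      have hyT : (x T k + ς T k) ^ 2 = 0 := hIcc T hT.le le_rfl
      intro t ht
      rcases le_or_gt t T with h | h
      · exact hIcc t ht h
      · have h3 := hanti2 Set.self_mem_Ici (le_of_lt h) (le_of_lt h)
        simp only at h3
        rw [hyT] at h3
        exact le_antisymm h3 (hynn t)
    intro t ht k
    exact pow_eq_zero_iff (by norm_num) |>.mp (key k t ht)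
  -- STEP 3 : derivative of x after Tr
  have hx' : ∀ t : ℝ, Tr < t → t ≠ T → ∀ k,
      HasDerivAt (fun τ => x τ k) (-((ρ1 + ρ2 * gain κ T t) * ((sLap W).mulVec (x t)) k)) t := by
    intro t ht hne k
    have hev : (fun τ => x τ k) =ᶠ[nhds t] (fun τ => -ς τ k) := by
      filter_upwards [Ioi_mem_nhds ht] with τ hτ
      have := hσ0 τ (le_of_lt hτ) k
      linarith
    exact ((hςk t (le_of_lt (lt_trans hTr ht)) (ne_of_gt ht) hne k).neg).congr_of_eventuallyEq hev
  -- continuity of Laplacian image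
  have hzc : ∀ k, Continuous (fun t => ((sLap W).mulVec (x t)) k) := by
    intro k
    have heq : (fun t => ((sLap W).mulVec (x t)) k) = fun t => ∑ j, sLap W k j * x t j := by
      funext t; simp [Matrix.mulVec, dotProduct]
    rw [heq]
    exact continuous_finset_sum _ fun j _ => continuous_const.mul ((continuous_apply j).comp hx)
  -- STEP 4 : L x(T) = 0
  have hzT : ∀ k, ((sLap W).mulVec (x T)) k = 0 := by
    intro k
    by_contra hne
    rcases lt_or_gt_of_ne hne with hneg | hpos
    · -- z T k < 0
      have hev : ∀ᶠ t in nhds T, ((sLap W).mulVec (x t)) k < ((sLap W).mulVec (x T)) k / 2 :=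
        ((hzc k).continuousAt).eventually (eventually_lt_nhds (by linarith))
      obtain ⟨ε, hε, hball⟩ := Metric.eventually_nhds_iff.mp hev
      set t0 : ℝ := max (T - ε / 2) ((Tr + T) / 2) with ht0def
      have ht0T : t0 < T := max_lt (by linarith) (by linarith)
      have hTrt0 : Tr < t0 := lt_of_lt_of_le (by linarith) (le_max_right _ _)
      refine blowup_aux (φ := fun t => -(x t k))
        (h := fun t => (ρ1 + ρ2 * gain κ T t) * ((sLap W).mulVec (x t)) k)
        (T := T) (t0 := t0) (a := ρ2 * κ * (-(((sLap W).mulVec (x T)) k) / 2)) (B := 0)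
        (by apply mul_pos (mul_pos hρ2 hκ0); linarith) ht0T
        ((continuous_apply k).comp hx).continuousAt.neg ?_ ?_
      · intro t ht
        have h1 : Tr < t := lt_of_lt_of_le hTrt0 ht.1
        simpa using (hx' t h1 (ne_of_lt ht.2) k).fun_neg
      · intro t ht
        have h1 : Tr < t := lt_of_lt_of_le hTrt0 ht.1
        have hTt : 0 < T - t := by have := ht.2; linarith
        have hgain : gain κ T t = κ * (T - t)⁻¹ := by
          rw [gain, if_pos ⟨by linarith, ht.2⟩, div_eq_mul_inv]
        have hz2 : ((sLap W).mulVec (x t)) k < ((sLap W).mulVec (x T)) k / 2 := by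
          apply hball
          rw [Real.dist_eq, abs_of_nonpos (by linarith [ht.2])]
          have h4 : T - ε / 2 ≤ t0 := le_max_left _ _
          have := ht.1
          linarith
        have hP : 0 < (T - t)⁻¹ := by positivity
        simp only [hgain, div_eq_mul_inv]
        have e1 : 0 ≤ ρ2 * κ * (T - t)⁻¹ *
            (((sLap W).mulVec (x T)) k / 2 - ((sLap W).mulVec (x t)) k) :=
          mul_nonneg (by positivity) (by linarith)
        have e2 : ρ1 * ((sLap W).mulVec (x t)) k ≤ 0 :=
          mul_nonpos_of_nonneg_of_nonpos hρ1.le (by linarith)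
        nlinarith [e1, e2]
    · -- z T k > 0
      have hev : ∀ᶠ t in nhds T, ((sLap W).mulVec (x T)) k / 2 < ((sLap W).mulVec (x t)) k :=
        ((hzc k).continuousAt).eventually (eventually_gt_nhds (by linarith))
      obtain ⟨ε, hε, hball⟩ := Metric.eventually_nhds_iff.mp hev
      set t0 : ℝ := max (T - ε / 2) ((Tr + T) / 2) with ht0def
      have ht0T : t0 < T := max_lt (by linarith) (by linarith)
      have hTrt0 : Tr < t0 := lt_of_lt_of_le (by linarith) (le_max_right _ _)
      refine blowup_aux (φ := fun t => x t k)
        (h := fun t => -((ρ1 + ρ2 * gain κ T t) * ((sLap W).mulVec (x t)) k))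
        (T := T) (t0 := t0) (a := ρ2 * κ * (((sLap W).mulVec (x T)) k / 2)) (B := 0)
        (by apply mul_pos (mul_pos hρ2 hκ0); linarith) ht0T
        ((continuous_apply k).comp hx).continuousAt ?_ ?_
      · intro t ht
        have h1 : Tr < t := lt_of_lt_of_le hTrt0 ht.1
        exact hx' t h1 (ne_of_lt ht.2) k
      · intro t ht
        have h1 : Tr < t := lt_of_lt_of_le hTrt0 ht.1
        have hTt : 0 < T - t := by have := ht.2; linarith
        have hgain : gain κ T t = κ * (T - t)⁻¹ := by
          rw [gain, if_pos ⟨by linarith, ht.2⟩, div_eq_mul_inv]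
        have hz2 : ((sLap W).mulVec (x T)) k / 2 < ((sLap W).mulVec (x t)) k := by
          apply hball
          rw [Real.dist_eq, abs_of_nonpos (by linarith [ht.2])]
          have h4 : T - ε / 2 ≤ t0 := le_max_left _ _
          have := ht.1
          linarith
        have hP : 0 < (T - t)⁻¹ := by positivity
        simp only [hgain, div_eq_mul_inv]
        have e1 : 0 ≤ ρ2 * κ * (T - t)⁻¹ *
            (((sLap W).mulVec (x t)) k - ((sLap W).mulVec (x T)) k / 2) :=
          mul_nonneg (by positivity) (by linarith)
        have e2 : 0 ≤ ρ1 * ((sLap W).mulVec (x t)) k :=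
          mul_nonneg hρ1.le (by linarith)
        nlinarith [e1, e2]
  -- STEP 5 : L x(t) = 0 for all t ≥ T
  have hz0 : ∀ t : ℝ, T ≤ t → ∀ k, ((sLap W).mulVec (x t)) k = 0 := by
    have hfc : Continuous (fun t => ∑ j, (((sLap W).mulVec (x t)) j) ^ 2) :=
      continuous_finset_sum _ fun j _ => ((hzc j).pow 2)
    have hfnn : ∀ t : ℝ, 0 ≤ ∑ j, (((sLap W).mulVec (x t)) j) ^ 2 :=
      fun t => Finset.sum_nonneg fun j _ => sq_nonneg _
    have hfT : ∑ j, (((sLap W).mulVec (x T)) j) ^ 2 = 0 := by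
      apply Finset.sum_eq_zero
      intro j _
      rw [hzT j]; ring
    set K : ℝ := 2 * ρ1 * (∑ k, ∑ j, |sLap W k j|) with hKdef
    have hK : 0 ≤ K := by
      apply mul_nonneg (by linarith)
      exact Finset.sum_nonneg fun k _ => Finset.sum_nonneg fun j _ => abs_nonneg _
    have hzk' : ∀ t : ℝ, T < t → ∀ k, HasDerivAt (fun τ => ((sLap W).mulVec (x τ)) k)
        (∑ j, sLap W k j * -(ρ1 * ((sLap W).mulVec (x t)) j)) t := by
      intro t ht k
      have hgain : gain κ T t = 0 := by
        rw [gain, if_neg]; rintro ⟨-, h⟩; exact absurd h (not_lt.mpr ht.le)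
      have heq : (fun τ => ((sLap W).mulVec (x τ)) k) = fun τ => ∑ j, sLap W k j * x τ j := by
        funext τ; simp [Matrix.mulVec, dotProduct]
      rw [heq]
      apply HasDerivAt.fun_sum
      intro j _
      have h2 := (hx' t (lt_trans hT ht) (ne_of_gt ht) j).const_mul (sLap W k j)
      rw [hgain] at h2
      exact h2.congr_deriv (by ring)
    have hf' : ∀ t : ℝ, T < t → HasDerivAt (fun t => ∑ j, (((sLap W).mulVec (x t)) j) ^ 2)
        (∑ k, 2 * ((sLap W).mulVec (x t)) k *
          (∑ j, sLap W k j * -(ρ1 * ((sLap W).mulVec (x t)) j))) t := by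
      intro t ht
      apply HasDerivAt.fun_sum
      intro k _
      have := (hzk' t ht k).fun_pow 2
      exact this.congr_deriv (by ring)
    have hb : ∀ t : ℝ, T < t →
        (∑ k, 2 * ((sLap W).mulVec (x t)) k *
          (∑ j, sLap W k j * -(ρ1 * ((sLap W).mulVec (x t)) j)))
          ≤ K * (∑ j, (((sLap W).mulVec (x t)) j) ^ 2) := by
      intro t ht
      have hKf : K * (∑ j, (((sLap W).mulVec (x t)) j) ^ 2)
          = ∑ k, ∑ j, 2 * ρ1 * |sLap W k j| * (∑ j, (((sLap W).mulVec (x t)) j) ^ 2) := by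
        rw [hKdef, mul_assoc, Finset.sum_mul, Finset.mul_sum]
        apply Finset.sum_congr rfl; intro k _
        rw [Finset.sum_mul, Finset.mul_sum]
        apply Finset.sum_congr rfl; intro j _
        ring
      rw [hKf]
      apply Finset.sum_le_sum
      intro k _
      rw [Finset.mul_sum]
      apply Finset.sum_le_sum
      intro j _
      have hA2 : (((sLap W).mulVec (x t)) k) ^ 2 ≤ ∑ j, (((sLap W).mulVec (x t)) j) ^ 2 :=
        Finset.single_le_sum (f := fun j => (((sLap W).mulVec (x t)) j) ^ 2)
          (fun j _ => sq_nonneg _) (Finset.mem_univ k)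
      have hB2 : (((sLap W).mulVec (x t)) j) ^ 2 ≤ ∑ j, (((sLap W).mulVec (x t)) j) ^ 2 :=
        Finset.single_le_sum (f := fun j => (((sLap W).mulVec (x t)) j) ^ 2)
          (fun j _ => sq_nonneg _) (Finset.mem_univ j)
      have hABf : |((sLap W).mulVec (x t)) k * ((sLap W).mulVec (x t)) j|
          ≤ ∑ j, (((sLap W).mulVec (x t)) j) ^ 2 := by
        rw [abs_mul]
        nlinarith [sq_nonneg (|((sLap W).mulVec (x t)) k| - |((sLap W).mulVec (x t)) j|),
          sq_abs (((sLap W).mulVec (x t)) k), sq_abs (((sLap W).mulVec (x t)) j),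
          abs_nonneg (((sLap W).mulVec (x t)) k), abs_nonneg (((sLap W).mulVec (x t)) j)]
      calc 2 * ((sLap W).mulVec (x t)) k * (sLap W k j * -(ρ1 * ((sLap W).mulVec (x t)) j))
          = -((2 * ρ1) * (sLap W k j * (((sLap W).mulVec (x t)) k * ((sLap W).mulVec (x t)) j))) := by
            ring
        _ ≤ |(2 * ρ1) * (sLap W k j * (((sLap W).mulVec (x t)) k * ((sLap W).mulVec (x t)) j))| :=
            neg_le_abs _
        _ = 2 * ρ1 * (|sLap W k j| *
              |((sLap W).mulVec (x t)) k * ((sLap W).mulVec (x t)) j|) := by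
            rw [abs_mul, abs_of_nonneg (by linarith : (0:ℝ) ≤ 2 * ρ1), abs_mul]
        _ ≤ 2 * ρ1 * (|sLap W k j| * (∑ j, (((sLap W).mulVec (x t)) j) ^ 2)) := by
            apply mul_le_mul_of_nonneg_left _ (by linarith : (0:ℝ) ≤ 2 * ρ1)
            exact mul_le_mul_of_nonneg_left hABf (abs_nonneg _)
        _ = 2 * ρ1 * |sLap W k j| * (∑ j, (((sLap W).mulVec (x t)) j) ^ 2) := by ring
    have hφ' : ∀ t : ℝ, T < t → HasDerivAt
        (fun t => Real.exp (-(K * t)) * ∑ j, (((sLap W).mulVec (x t)) j) ^ 2)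
        (Real.exp (-(K * t)) * -K * (∑ j, (((sLap W).mulVec (x t)) j) ^ 2)
          + Real.exp (-(K * t)) * (∑ k, 2 * ((sLap W).mulVec (x t)) k *
            (∑ j, sLap W k j * -(ρ1 * ((sLap W).mulVec (x t)) j)))) t := by
      intro t ht
      have h1 : HasDerivAt (fun τ => Real.exp (-(K * τ))) (Real.exp (-(K * t)) * -K) t := by
        have h0 : HasDerivAt (fun τ : ℝ => -(K * τ)) (-K) t := by
          simpa using ((hasDerivAt_id t).const_mul K).fun_neg
        simpa using h0.exp
      exact h1.mul (hf' t ht)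
    have hφd : ∀ t : ℝ, T < t →
        deriv (fun t => Real.exp (-(K * t)) * ∑ j, (((sLap W).mulVec (x t)) j) ^ 2) t ≤ 0 := by
      intro t ht
      rw [(hφ' t ht).deriv]
      have hE : 0 < Real.exp (-(K * t)) := Real.exp_pos _
      have h2 := mul_le_mul_of_nonneg_left (hb t ht) hE.le
      nlinarith [hfnn t, h2]
    have hφcont : Continuous (fun t => Real.exp (-(K * t)) * ∑ j, (((sLap W).mulVec (x t)) j) ^ 2) :=
      (Real.continuous_exp.comp (continuous_const.mul continuous_id).neg).mul hfc
    have hanti : AntitoneOn (fun t => Real.exp (-(K * t)) * ∑ j, (((sLap W).mulVec (x t)) j) ^ 2)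
        (Set.Ici T) := by
      apply antitoneOn_of_deriv_nonpos (convex_Ici T) hφcont.continuousOn
      · intro t ht; rw [interior_Ici] at ht
        exact (hφ' t ht).differentiableAt.differentiableWithinAt
      · intro t ht; rw [interior_Ici] at ht; exact hφd t ht
    intro t ht k
    have hφt := hanti Set.self_mem_Ici ht ht
    simp only at hφt
    rw [hfT, mul_zero] at hφt
    have hE : 0 < Real.exp (-(K * t)) := Real.exp_pos _
    have hf0 : ∑ j, (((sLap W).mulVec (x t)) j) ^ 2 = 0 := by
      have h1 : 0 ≤ Real.exp (-(K * t)) * ∑ j, (((sLap W).mulVec (x t)) j) ^ 2 :=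
        mul_nonneg hE.le (hfnn t)
      have h2 : Real.exp (-(K * t)) * ∑ j, (((sLap W).mulVec (x t)) j) ^ 2 = 0 :=
        le_antisymm hφt h1
      rcases mul_eq_zero.mp h2 with h | h
      · exact absurd h (ne_of_gt hE)
      · exact h
    have := (Finset.sum_eq_zero_iff_of_nonneg (fun j _ => sq_nonneg _)).mp hf0 k (Finset.mem_univ k)
    exact pow_eq_zero_iff (by norm_num) |>.mp this
  -- STEP 6 : x constant on [T, ∞)
  have hconst : ∀ t : ℝ, T ≤ t → ∀ k, x t k = x T k := by
    intro t ht k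
    have hcont : ContinuousOn (fun τ => x τ k) (Set.Ici T) :=
      ((continuous_apply k).comp hx).continuousOn
    have hder0 : ∀ τ ∈ interior (Set.Ici T), HasDerivAt (fun τ => x τ k) 0 τ := by
      intro τ hτ
      rw [interior_Ici] at hτ
      have h1 := hx' τ (lt_trans hT hτ) (ne_of_gt hτ) k
      rw [hz0 τ (le_of_lt hτ) k] at h1
      simpa using h1
    have hmono : MonotoneOn (fun τ => x τ k) (Set.Ici T) := by
      apply monotoneOn_of_deriv_nonneg (convex_Ici T) hcont
      · intro τ hτ; exact (hder0 τ hτ).differentiableAt.differentiableWithinAt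
      · intro τ hτ; rw [(hder0 τ hτ).deriv]
    have hantix : AntitoneOn (fun τ => x τ k) (Set.Ici T) := by
      apply antitoneOn_of_deriv_nonpos (convex_Ici T) hcont
      · intro τ hτ; exact (hder0 τ hτ).differentiableAt.differentiableWithinAt
      · intro τ hτ; rw [(hder0 τ hτ).deriv]
    exact le_antisymm (hantix Set.self_mem_Ici ht ht) (hmono Set.self_mem_Ici ht ht)
  -- STEP 7 : conclude
  have hmul0 : (sLap W).mulVec (x T) = 0 := by
    funext k; simpa using hzT k
  obtain ⟨c, hc⟩ := kernel_lemma (by omega) W hSC g hg (x T) hmul0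
  exact ⟨c, fun t ht k => by rw [hconst t ht k, hc k]⟩
end

section
/- Suppose the digraph of W is strongly connected and structurally unbalanced (no gauge for the full node set exists). Then for every closed-loop trajectory (x, ς, s) of the prescribed-time sliding mode protocol with data (ρ1, ρ2, T_r, T_s, μ1, μ2, μ3, δ, d), one has x t k = 0 for all nodes k and all t ≥ T_r + T_s (prescribed-time stability within the preassigned time T_r + T_s despite the disturbances). -/
open Matrix

section SMCAux
open Set


/-- If `f` is continuous on `[a,b]` and has nonpositive derivative on `(a,b)`, it is antitone. -/
lemma aux_antitone (f : ℝ → ℝ) (a b : ℝ)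
    (hcont : ContinuousOn f (Icc a b))
    (hd : ∀ t ∈ Ioo a b, ∃ f', HasDerivAt f f' t ∧ f' ≤ 0) :
    AntitoneOn f (Icc a b) := by
  apply antitoneOn_of_deriv_nonpos (convex_Icc a b) hcont
  · rw [interior_Icc]
    intro t ht
    obtain ⟨f', hf', _⟩ := hd t ht
    exact hf'.differentiableAt.differentiableWithinAt
  · rw [interior_Icc]
    intro t ht
    obtain ⟨f', hf', hle⟩ := hd t ht
    rwa [hf'.deriv]

/-- Gronwall-power lemma: nonnegative `f` with `f' ≤ -(P/(b-t)) f` on `(a,b)` vanishes at `b`. -/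
lemma aux_gronwall_power (f : ℝ → ℝ) (a b P : ℝ) (hab : a < b) (hP : 0 < P)
    (hf0 : ∀ t ∈ Icc a b, 0 ≤ f t)
    (hcont : ContinuousOn f (Icc a b))
    (hd : ∀ t ∈ Ioo a b, ∃ f', HasDerivAt f f' t ∧ f' ≤ -(P / (b - t)) * f t) :
    f b = 0 := by
  set g : ℝ → ℝ := fun t => (b - t) ^ (-P) with hg
  set h : ℝ → ℝ := fun t => f t * g t with hh
  have hgpos : ∀ t ∈ Ico a b, 0 < b - t := fun t ht => by simp [sub_pos, ht.2]
  -- h is antitone on Ico a b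
  have hanti : AntitoneOn h (Ico a b) := by
    apply antitoneOn_of_deriv_nonpos (convex_Ico a b)
    · apply ContinuousOn.mul (hcont.mono Ico_subset_Icc_self)
      apply ContinuousOn.rpow_const ((continuousOn_const.sub continuousOn_id))
      intro t ht
      exact Or.inl (ne_of_gt (hgpos t ht))
    · rw [interior_Ico]
      intro t ht
      obtain ⟨f', hf', _⟩ := hd t ht
      have hbt : (0:ℝ) < b - t := by linarith [ht.2]
      have hg' : HasDerivAt g (P * (b - t) ^ (-P - 1)) t := by
        have h1 : HasDerivAt (fun u : ℝ => u ^ (-P)) ((-P) * (b - t) ^ (-P - 1)) (b - t) :=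
          Real.hasDerivAt_rpow_const (Or.inl (ne_of_gt hbt))
        have h2 : HasDerivAt (fun t : ℝ => b - t) (-1) t := by
          exact (hasDerivAt_id' t).const_sub b
        have := h1.comp t h2
        exact this.congr_deriv (by ring)
      exact ((hf'.mul hg').differentiableAt).differentiableWithinAt
    · rw [interior_Ico]
      intro t ht
      obtain ⟨f', hf', hle⟩ := hd t ht
      have hbt : (0:ℝ) < b - t := by linarith [ht.2]
      have hg' : HasDerivAt g (P * (b - t) ^ (-P - 1)) t := by
        have h1 : HasDerivAt (fun u : ℝ => u ^ (-P)) ((-P) * (b - t) ^ (-P - 1)) (b - t) :=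
          Real.hasDerivAt_rpow_const (Or.inl (ne_of_gt hbt))
        have h2 : HasDerivAt (fun t : ℝ => b - t) (-1) t := by
          exact (hasDerivAt_id' t).const_sub b
        have := h1.comp t h2
        exact this.congr_deriv (by ring)
      have hh' : HasDerivAt h (f' * g t + f t * (P * (b - t) ^ (-P - 1))) t := hf'.mul hg'
      rw [hh'.deriv]
      have hgt0 : (0:ℝ) < g t := Real.rpow_pos_of_pos hbt _
      have key : (b - t) ^ (-P) * (b - t)⁻¹ = (b - t) ^ (-P - 1) := by
        rw [show -P - 1 = -P + (-1) by ring, Real.rpow_add hbt, Real.rpow_neg_one]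
      have h1 : f' * g t ≤ -(P / (b - t)) * f t * g t :=
        mul_le_mul_of_nonneg_right hle hgt0.le
      have hft : 0 ≤ f t := hf0 t ⟨ht.1.le, ht.2.le⟩
      have h2 : -(P / (b - t)) * f t * g t = -(f t * (P * (b - t) ^ (-P - 1))) := by
        rw [← key, div_eq_mul_inv]; ring
      nlinarith [h1, h2]
  -- bound f t for t in Ico
  have hbound : ∀ t ∈ Ico a b, f t ≤ f a * (b - a) ^ (-P) * (b - t) ^ P := by
    intro t ht
    have := hanti (left_mem_Ico.mpr hab) ht ht.1
    have hbt := hgpos t ht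
    have : f t * (b - t) ^ (-P) ≤ f a * (b - a) ^ (-P) := by
      simpa [hh, hg, sub_self] using this
    calc f t = f t * (b - t) ^ (-P) * (b - t) ^ P := by
          rw [mul_assoc, ← Real.rpow_add hbt]; simp
      _ ≤ f a * (b - a) ^ (-P) * (b - t) ^ P := by
          apply mul_le_mul_of_nonneg_right this (Real.rpow_pos_of_pos hbt _).le
  -- take the limit
  have hne : (nhdsWithin b (Ico a b)).NeBot := by
    rw [← mem_closure_iff_nhdsWithin_neBot, closure_Ico (ne_of_lt hab)]
    exact right_mem_Icc.mpr hab.le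
  have htendf : Filter.Tendsto f (nhdsWithin b (Ico a b)) (nhds (f b)) :=
    (hcont b (right_mem_Icc.mpr hab.le)).mono Ico_subset_Icc_self
  have htendG : Filter.Tendsto (fun t => f a * (b - a) ^ (-P) * (b - t) ^ P)
      (nhdsWithin b (Ico a b)) (nhds 0) := by
    have hc : ContinuousAt (fun t : ℝ => f a * (b - a) ^ (-P) * (b - t) ^ P) b := by
      apply ContinuousAt.mul continuousAt_const
      exact (Real.continuousAt_rpow_const _ _ (Or.inr hP.le)).comp
        ((continuousAt_const.sub continuousAt_id))
    have h0 := (hc.continuousWithinAt (s := Ico a b)).tendsto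
    simpa [Real.zero_rpow (ne_of_gt hP)] using h0
  have hle : f b ≤ 0 :=
    le_of_tendsto_of_tendsto htendf htendG
      (Filter.eventually_iff_exists_mem.mpr ⟨Ico a b, self_mem_nhdsWithin,
        fun t ht => hbound t ht⟩)
  exact le_antisymm hle (hf0 b (right_mem_Icc.mpr hab.le))

lemma aux_perron {N : ℕ} (hN : 1 ≤ N) (W : Matrix (Fin N) (Fin N) ℝ)
    (hSC : StronglyConnected W) :
    ∃ p : Fin N → ℝ, (∀ k, 0 < p k) ∧
      ∀ l, ∑ k, p k * |W k l| = p l * ∑ m, |W l m| := by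
  haveI : NeZero N := ⟨by omega⟩
  set M : Matrix (Fin N) (Fin N) ℝ :=
    Matrix.diagonal (fun k => ∑ m, |W k m|) - Matrix.of (fun k l => |W k l|) with hM
  have hdet : M.det = 0 := by
    rw [← Matrix.exists_mulVec_eq_zero_iff]
    refine ⟨fun _ => 1, ?_, ?_⟩
    · intro h; have := congrFun h ⟨0, by omega⟩; simp at this
    · funext k
      simp [hM, Matrix.sub_mulVec, Matrix.mulVec, dotProduct,
        Matrix.diagonal_apply, Finset.sum_ite_eq]
  obtain ⟨v, hv0, hv⟩ := Matrix.exists_vecMul_eq_zero_iff.mpr hdet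
  have hvl : ∀ l, ∑ k, v k * |W k l| = v l * ∑ m, |W l m| := by
    intro l
    have h := congrFun hv l
    simp only [hM, Matrix.vecMul, dotProduct, Matrix.sub_apply,
      Matrix.diagonal_apply, Matrix.of_apply, Pi.zero_apply, mul_sub,
      mul_ite, mul_zero] at h
    rw [Finset.sum_sub_distrib, Finset.sum_ite_eq' Finset.univ l (fun k => v k * ∑ m, |W k m|)] at h
    simp only [Finset.mem_univ, if_true] at h
    linarith
  have habs : ∀ l, ∑ k, |v k| * |W k l| = |v l| * ∑ m, |W l m| := by
    have hge : ∀ l, |v l| * ∑ m, |W l m| ≤ ∑ k, |v k| * |W k l| := by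
      intro l
      have h1 : abs (v l * ∑ m, |W l m|) = |v l| * ∑ m, |W l m| := by
        rw [abs_mul, abs_of_nonneg (a := ∑ m, |W l m|) (Finset.sum_nonneg fun m _ => abs_nonneg _)]
      calc |v l| * ∑ m, |W l m| = abs (∑ k, v k * |W k l|) := by rw [← h1, hvl l]
        _ ≤ ∑ k, abs (v k * |W k l|) := Finset.abs_sum_le_sum_abs _ _
        _ = ∑ k, |v k| * |W k l| := by simp [abs_mul, abs_abs]
    have htot0 : ∑ l, ∑ k, |v k| * |W k l| = ∑ l, |v l| * ∑ m, |W l m| := by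
      rw [Finset.sum_comm]
      exact Finset.sum_congr rfl (fun k _ => (Finset.mul_sum _ _ _).symm)
    have htot : ∑ l, (∑ k, |v k| * |W k l| - |v l| * ∑ m, |W l m|) = 0 := by
      rw [Finset.sum_sub_distrib, htot0, sub_self]
    intro l
    have := (Finset.sum_eq_zero_iff_of_nonneg
      (fun i _ => by linarith [hge i])).mp htot l (Finset.mem_univ l)
    linarith
  have hprop : ∀ j i, Reaches W j i → v j = 0 → v i = 0 := by
    intro j i hreach
    induction hreach with
    | refl => exact fun h => h
    | @tail b c hjb hedge ih =>
      intro hj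
      have hb : |v b| = 0 := by rw [ih hj]; simp
      have h2 := habs b
      rw [hb, zero_mul] at h2
      have hterm := (Finset.sum_eq_zero_iff_of_nonneg
        (fun k _ => mul_nonneg (abs_nonneg _) (abs_nonneg _))).mp h2 c (Finset.mem_univ c)
      rcases mul_eq_zero.mp hterm with h | h
      · exact abs_eq_zero.mp h
      · exact absurd (abs_eq_zero.mp h) hedge
  have hvne : ∀ k, v k ≠ 0 := by
    intro k hk
    exact hv0 (funext fun i => hprop k i (hSC k i) hk)
  exact ⟨fun k => |v k|, fun k => abs_pos.mpr (hvne k), habs⟩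

lemma aux_posdef {N : ℕ} (hN : 1 ≤ N) (W : Matrix (Fin N) (Fin N) ℝ)
    (hSC : StronglyConnected W)
    (hunb : ¬ ∃ g : Fin N → ℝ, IsGauge W Set.univ g) :
    ∃ (p : Fin N → ℝ) (c : ℝ), (∀ k, 0 < p k) ∧ 0 < c ∧
      ∀ x : Fin N → ℝ, c * ∑ k, (x k)^2 ≤ ∑ k, p k * x k * ((sLap W).mulVec x) k := by
  haveI : NeZero N := ⟨by omega⟩
  obtain ⟨p, hp, hperron⟩ := aux_perron hN W hSC
  set Q : (Fin N → ℝ) → ℝ := fun x => ∑ k, p k * x k * ((sLap W).mulVec x) k with hQ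
  have hmv : ∀ (x : Fin N → ℝ) k,
      (sLap W).mulVec x k = (∑ m, |W k m|) * x k - ∑ l, W k l * x l := by
    intro x k
    simp [sLap, Matrix.sub_mulVec, Matrix.mulVec, dotProduct,
      Matrix.diagonal_apply, sub_mul, Finset.sum_sub_distrib, ite_mul, zero_mul,
      Finset.sum_ite_eq]
  have hexpand : ∀ x : Fin N → ℝ,
      Q x = (∑ k, p k * (∑ m, |W k m|) * (x k)^2)
            - ∑ k, ∑ l, p k * (W k l * (x k * x l)) := by
    intro x
    rw [hQ, ← Finset.sum_sub_distrib]
    refine Finset.sum_congr rfl fun k _ => ?_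
    rw [hmv x k]
    have h1 : ∑ l, p k * (W k l * (x k * x l)) = p k * x k * ∑ l, W k l * x l := by
      rw [Finset.mul_sum]
      exact Finset.sum_congr rfl fun l _ => by ring
    rw [h1]
    ring
  set E1 : (Fin N → ℝ) → ℝ := fun x =>
    ∑ k, ∑ l, p k * (|W k l| * (|x k| * |x l|) - W k l * (x k * x l)) with hE1
  set E2 : (Fin N → ℝ) → ℝ := fun x =>
    ∑ k, ∑ l, p k * |W k l| * (|x k| - |x l|)^2 with hE2
  have hsplit : ∀ x : Fin N → ℝ, Q x = E1 x + (1/2) * E2 x := by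
    intro x
    have hA : ∀ k, ∑ l, p k * |W k l| * (x k)^2 = p k * (∑ m, |W k m|) * (x k)^2 := by
      intro k
      rw [← Finset.sum_mul, ← Finset.mul_sum]
    have hB : ∑ k, ∑ l, p k * |W k l| * (x l)^2
        = ∑ k, p k * (∑ m, |W k m|) * (x k)^2 := by
      rw [Finset.sum_comm]
      refine Finset.sum_congr rfl fun l _ => ?_
      rw [← Finset.sum_mul, hperron l]
    have hid : E2 x = 2 * ((∑ k, p k * (∑ m, |W k m|) * (x k)^2)
        - ∑ k, ∑ l, p k * (|W k l| * (|x k| * |x l|))) := by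
      have e1 : E2 x = ∑ k, ∑ l, (p k * |W k l| * (x k)^2 + p k * |W k l| * (x l)^2
          - 2 * (p k * (|W k l| * (|x k| * |x l|)))) := by
        rw [hE2]
        refine Finset.sum_congr rfl fun k _ => Finset.sum_congr rfl fun l _ => ?_
        rw [sub_sq]
        have h1 : |x k| ^ 2 = x k ^ 2 := sq_abs _
        have h2 : |x l| ^ 2 = x l ^ 2 := sq_abs _
        rw [mul_add, mul_sub]
        rw [h1, h2]  -- might fail; fallback below
        ring
      rw [e1]
      simp only [Finset.sum_sub_distrib, Finset.sum_add_distrib, ← Finset.mul_sum]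
      rw [Finset.sum_congr rfl fun k _ => hA k, hB]
      ring
    have hE1x : E1 x = (∑ k, ∑ l, p k * (|W k l| * (|x k| * |x l|)))
        - ∑ k, ∑ l, p k * (W k l * (x k * x l)) := by
      rw [hE1]
      simp only [mul_sub, Finset.sum_sub_distrib]
    rw [hexpand x, hE1x]
    linarith [hid]
  have hE1nonneg : ∀ (x : Fin N → ℝ) k l,
      (0:ℝ) ≤ p k * (|W k l| * (|x k| * |x l|) - W k l * (x k * x l)) := by
    intro x k l
    apply mul_nonneg (hp k).le
    have h := le_abs_self (W k l * (x k * x l))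
    rw [abs_mul, abs_mul] at h
    linarith
  have hE2nonneg : ∀ (x : Fin N → ℝ) k l, (0:ℝ) ≤ p k * |W k l| * (|x k| - |x l|)^2 :=
    fun x k l => mul_nonneg (mul_nonneg (hp k).le (abs_nonneg _)) (sq_nonneg _)
  have hQnonneg : ∀ x, 0 ≤ Q x := by
    intro x
    rw [hsplit x]
    have h1 : 0 ≤ E1 x := Finset.sum_nonneg fun k _ => Finset.sum_nonneg fun l _ => hE1nonneg x k l
    have h2 : 0 ≤ E2 x := Finset.sum_nonneg fun k _ => Finset.sum_nonneg fun l _ => hE2nonneg x k l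
    linarith
  have hQpos : ∀ x : Fin N → ℝ, x ≠ 0 → 0 < Q x := by
    intro x hx
    rcases lt_or_eq_of_le (hQnonneg x) with h | h
    · exact h
    exfalso
    have h1 : 0 ≤ E1 x := Finset.sum_nonneg fun k _ => Finset.sum_nonneg fun l _ => hE1nonneg x k l
    have h2 : 0 ≤ E2 x := Finset.sum_nonneg fun k _ => Finset.sum_nonneg fun l _ => hE2nonneg x k l
    have hsx := hsplit x
    have hE1z : E1 x = 0 := by linarith
    have hE2z : E2 x = 0 := by linarith
    have hE1term : ∀ k l, p k * (|W k l| * (|x k| * |x l|) - W k l * (x k * x l)) = 0 := by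
      intro k l
      have hk := (Finset.sum_eq_zero_iff_of_nonneg (fun k _ =>
        Finset.sum_nonneg fun l _ => hE1nonneg x k l)).mp hE1z k (Finset.mem_univ k)
      exact (Finset.sum_eq_zero_iff_of_nonneg (fun l _ => hE1nonneg x k l)).mp hk l
        (Finset.mem_univ l)
    have hE2term : ∀ k l, p k * |W k l| * (|x k| - |x l|)^2 = 0 := by
      intro k l
      have hk := (Finset.sum_eq_zero_iff_of_nonneg (fun k _ =>
        Finset.sum_nonneg fun l _ => hE2nonneg x k l)).mp hE2z k (Finset.mem_univ k)
      exact (Finset.sum_eq_zero_iff_of_nonneg (fun l _ => hE2nonneg x k l)).mp hk l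
        (Finset.mem_univ l)
    have habs_edge : ∀ k l, W k l ≠ 0 → |x k| = |x l| := by
      intro k l hw
      have h := hE2term k l
      rcases mul_eq_zero.mp h with h' | h'
      · exfalso
        have := mul_pos (hp k) (abs_pos.mpr hw)
        linarith [this, h']
      · have := sq_eq_zero_iff.mp h'
        linarith
    have habs_all : ∀ i j : Fin N, Reaches W i j → |x j| = |x i| := by
      intro i j hr
      induction hr with
      | refl => rfl
      | @tail b c hib hedge ih => rw [habs_edge c b hedge, ih]
    obtain ⟨k0, hk0⟩ : ∃ k, x k ≠ 0 := by
      by_contra hall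
      push_neg at hall
      exact hx (funext hall)
    set c0 := |x k0| with hc0
    have hc0pos : 0 < c0 := abs_pos.mpr hk0
    have hall : ∀ k, |x k| = c0 := fun k => habs_all k0 k (hSC k0 k)
    apply hunb
    refine ⟨fun k => x k / c0, ?_, ?_⟩
    · intro k _
      have habs1 : |x k / c0| = 1 := by
        rw [abs_div, hall k, abs_of_pos hc0pos, div_self (ne_of_gt hc0pos)]
      rcases (abs_eq (by norm_num : (0:ℝ) ≤ 1)).mp habs1 with h' | h'
      · exact Or.inl h'
      · exact Or.inr h'
    · intro k _ l _
      have ht := hE1term k l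
      have hpk := ne_of_gt (hp k)
      have hW : W k l * (x k * x l) = |W k l| * (|x k| * |x l|) := by
        rcases mul_eq_zero.mp ht with h' | h'
        · exact absurd h' hpk
        · linarith [sub_eq_zero.mp h']
      have hdiv : x k / c0 * W k l * (x l / c0) = W k l * (x k * x l) / (c0^2) := by
        field_simp
      rw [hdiv, hW, hall k, hall l]
      have hcc : c0 * c0 / c0 ^ 2 = 1 := by
        rw [← sq]
        exact div_self (pow_ne_zero 2 (ne_of_gt hc0pos))
      rw [mul_div_assoc, hcc, mul_one]
  -- compactness for uniform constant
  set S : Set (Fin N → ℝ) := {y | ∑ k, (y k)^2 = 1} with hS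
  have hcontsum : Continuous (fun y : Fin N → ℝ => ∑ k, (y k)^2) :=
    continuous_finset_sum _ fun k _ => (continuous_apply k).pow 2
  have hSclosed : IsClosed S := isClosed_eq hcontsum continuous_const
  have hSbdd : Bornology.IsBounded S := by
    apply Bornology.IsBounded.subset (Metric.isBounded_closedBall (x := (0 : Fin N → ℝ)) (r := 1))
    intro y hy
    simp only [Metric.mem_closedBall, dist_zero_right]
    apply pi_norm_le_iff_of_nonneg zero_le_one |>.mpr
    intro k
    have h1 : (y k)^2 ≤ 1 := by
      have hsum : ∑ j, (y j)^2 = 1 := hy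
      have h3 : (y k)^2 ≤ ∑ j, (y j)^2 :=
        Finset.single_le_sum (fun j _ => sq_nonneg (y j)) (Finset.mem_univ k)
      linarith
    rw [Real.norm_eq_abs, ← Real.sqrt_one, ← Real.sqrt_sq_eq_abs]
    exact Real.sqrt_le_sqrt h1
  have hScompact : IsCompact S := Metric.isCompact_of_isClosed_isBounded hSclosed hSbdd
  have hSne : S.Nonempty := by
    refine ⟨fun k => if k = ⟨0, by omega⟩ then 1 else 0, ?_⟩
    simp only [hS, Set.mem_setOf_eq]
    rw [Finset.sum_congr rfl (fun k _ => by
      split_ifs <;> norm_num : ∀ k ∈ Finset.univ,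
        ((if k = (⟨0, by omega⟩ : Fin N) then (1:ℝ) else 0))^2
          = if k = (⟨0, by omega⟩ : Fin N) then 1 else 0)]
    rw [Finset.sum_ite_eq']; simp
  have hQeq : Q = fun x => ∑ k, p k * x k * ((∑ m, |W k m|) * x k - ∑ l, W k l * x l) := by
    funext x
    exact Finset.sum_congr rfl fun k _ => by rw [hmv]
  have hQcont : Continuous Q := by
    rw [hQeq]
    apply continuous_finset_sum
    intro k _
    apply Continuous.mul (continuous_const.mul (continuous_apply k))
    exact (continuous_const.mul (continuous_apply k)).sub
      (continuous_finset_sum _ fun l _ => continuous_const.mul (continuous_apply l))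
  obtain ⟨y0, hy0S, hy0min⟩ := hScompact.exists_isMinOn hSne hQcont.continuousOn
  set c := Q y0 with hc
  have hy0ne : y0 ≠ 0 := by
    intro h
    have h2 : ∑ k, (y0 k)^2 = 1 := hy0S
    rw [h] at h2
    simp at h2
  have hcpos : 0 < c := hQpos y0 hy0ne
  refine ⟨p, c, hp, hcpos, ?_⟩
  intro x
  by_cases hx : x = 0
  · subst hx
    simp [hQ, Matrix.mulVec_zero]
  · set r := Real.sqrt (∑ k, (x k)^2) with hr
    have hsumpos : 0 < ∑ k, (x k)^2 := by
      obtain ⟨k0, hk0⟩ : ∃ k, x k ≠ 0 := by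
        by_contra hall; push_neg at hall; exact hx (funext hall)
      have h1 : 0 < (x k0)^2 := by positivity
      have h2 : (x k0)^2 ≤ ∑ j, (x j)^2 :=
        Finset.single_le_sum (fun j _ => sq_nonneg (x j)) (Finset.mem_univ k0)
      linarith
    have hrpos : 0 < r := Real.sqrt_pos.mpr hsumpos
    have hrsq : r^2 = ∑ k, (x k)^2 := Real.sq_sqrt hsumpos.le
    have hyS : (r⁻¹ • x) ∈ S := by
      simp only [hS, Set.mem_setOf_eq, Pi.smul_apply, smul_eq_mul]
      rw [Finset.sum_congr rfl (fun k _ => by ring : ∀ k ∈ Finset.univ,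
        (r⁻¹ * x k)^2 = r⁻¹^2 * (x k)^2), ← Finset.mul_sum, ← hrsq]
      field_simp
    have hscale : Q (r⁻¹ • x) = r⁻¹^2 * Q x := by
      rw [hQ]
      simp only [Matrix.mulVec_smul, Pi.smul_apply, smul_eq_mul]
      rw [Finset.mul_sum]
      exact Finset.sum_congr rfl fun k _ => by ring
    have hmin := hy0min hyS
    have hle : c ≤ r⁻¹^2 * Q x := by rw [← hscale]; exact hmin
    have hfin : c * r^2 ≤ Q x := by
      have hr2 : (0:ℝ) < r^2 := by positivity
      calc c * r^2 ≤ (r⁻¹^2 * Q x) * r^2 := by nlinarith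
        _ = Q x := by field_simp
    rw [← hrsq]
    exact hfin

lemma gain_nonneg {κ T t : ℝ} (hκ : 0 ≤ κ) : 0 ≤ gain κ T t := by
  unfold gain
  split
  · next h => exact div_nonneg hκ (by linarith [h.2])
  · exact le_refl 0


end SMCAux

set_option maxHeartbeats 2000000 in
theorem smc_prescribed_time_stability_strong_unbalanced
    {N : ℕ} (hN : 2 ≤ N) (W : Matrix (Fin N) (Fin N) ℝ)
    (hdiag : ∀ k, W k k = 0)
    (hSC : StronglyConnected W)
    (hunb : ¬ ∃ g : Fin N → ℝ, IsGauge W Set.univ g)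
    (κ ρ1 ρ2 Tr Ts μ1 μ2 μ3 δ : ℝ) (hκ : 2 < κ)
    (hρ1 : 0 < ρ1) (hρ2 : 0 < ρ2) (hTr : 0 < Tr) (hTs : 0 < Ts)
    (hμ2 : 0 < μ2) (hμ3 : 0 < μ3) (hδ : 0 ≤ δ) (hμ1 : δ < μ1)
    (d : ℝ → Fin N → ℝ) (hd : ∀ t : ℝ, 0 ≤ t → ∀ k, |d t k| ≤ δ)
    (x ς s : ℝ → Fin N → ℝ)
    (htraj : SMCTraj W κ ρ1 ρ2 Tr Ts μ1 μ2 μ3 d x ς s) :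
    ∀ t : ℝ, Tr + Ts ≤ t → ∀ k, x t k = 0 := by
  obtain ⟨hxc, hςc, hsel, hode⟩ := htraj
  set T : ℝ := Tr + Ts with hT
  have hTrT : Tr < T := by simp [hT]; linarith
  have hT0 : 0 < T := by linarith
  have hκ0 : (0:ℝ) ≤ κ := by linarith
  -- sliding variable, componentwise
  set Sig : Fin N → ℝ → ℝ := fun k t => x t k + ς t k with hSig
  have hSigc : ∀ k, Continuous (Sig k) :=
    fun k => ((continuous_apply k).comp hxc).add ((continuous_apply k).comp hςc)
  have hxkc : ∀ k, Continuous (fun t => x t k) := fun k => (continuous_apply k).comp hxc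
  -- componentwise derivative of ς
  have hςk : ∀ t : ℝ, 0 ≤ t → t ≠ Tr → t ≠ T → ∀ k,
      HasDerivAt (fun τ => ς τ k)
        ((ρ1 + ρ2 * gain κ T t) * ((sLap W).mulVec (x t)) k) t := by
    intro t ht htr htt k
    have h := (hode t ht htr htt).1
    have h2 := ((ContinuousLinearMap.proj k : (Fin N → ℝ) →L[ℝ] ℝ).hasFDerivAt).comp t
      h.hasFDerivAt
    have h3 := h2.hasDerivAt
    simpa [Function.comp_def] using h3
  -- derivative of sliding component
  have hSig' : ∀ t : ℝ, 0 ≤ t → t ≠ Tr → t ≠ T → ∀ k,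
      HasDerivAt (Sig k)
        (- (μ1 * s t k) - (μ2 + μ3 * gain κ Tr t) * Sig k t + d t k) t := by
    intro t ht htr htt k
    have hx' := (hode t ht htr htt).2 k
    have hς' := hςk t ht htr htt k
    have := hx'.add hς'
    refine this.congr_deriv ?_
    simp [hSig]
    ring
  -- derivative of squared sliding component with bound
  have hSigSq : ∀ t : ℝ, 0 ≤ t → t ≠ Tr → t ≠ T → ∀ k,
      ∃ f', HasDerivAt (fun τ => (Sig k τ)^2) f' t ∧
        f' ≤ -(2 * μ3 * gain κ Tr t) * (Sig k t)^2 := by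
    intro t ht htr htt k
    have hs' := hSig' t ht htr htt k
    refine ⟨2 * Sig k t ^ 1 * (- (μ1 * s t k) - (μ2 + μ3 * gain κ Tr t) * Sig k t + d t k),
      hs'.pow 2, ?_⟩
    have hsel1 := (hsel t k).2
    have hdb := hd t ht k
    have habs : s t k * Sig k t = |Sig k t| := by
      rw [hSig]; exact hsel1
    have h1 : d t k * Sig k t ≤ δ * |Sig k t| := by
      calc d t k * Sig k t ≤ |d t k * Sig k t| := le_abs_self _
        _ = |d t k| * |Sig k t| := abs_mul _ _
        _ ≤ δ * |Sig k t| := mul_le_mul_of_nonneg_right hdb (abs_nonneg _)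
    have hg := gain_nonneg (κ := κ) (T := Tr) (t := t) hκ0
    have habs0 : 0 ≤ |Sig k t| := abs_nonneg _
    have hsq : (Sig k t)^2 = Sig k t * Sig k t := sq (Sig k t)
    simp only [pow_one]
    nlinarith [mul_nonneg hμ2.le (sq_nonneg (Sig k t)), sq_nonneg (Sig k t),
      mul_nonneg (by linarith : (0:ℝ) ≤ μ1 - δ) habs0, habs, h1]
  -- Step 1: Sig vanishes at Tr
  have hSigTr : ∀ k, Sig k Tr = 0 := by
    intro k
    have hz := aux_gronwall_power (fun t => (Sig k t)^2) 0 Tr (2 * μ3 * κ) hTr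
      (by positivity)
      (fun t _ => sq_nonneg _)
      (((hSigc k).pow 2).continuousOn)
      ?_
    · exact (pow_eq_zero_iff two_ne_zero).mp hz
    · intro t ht
      have ht0 : (0:ℝ) ≤ t := ht.1.le
      have htr : t ≠ Tr := ne_of_lt ht.2
      have htt : t ≠ T := by linarith [ht.2, hTrT]
      obtain ⟨f', hf', hle⟩ := hSigSq t ht0 htr htt k
      refine ⟨f', hf', ?_⟩
      have hgain : gain κ Tr t = κ / (Tr - t) := by
        unfold gain
        rw [if_pos ⟨ht0, ht.2⟩]
      have heq : -(2 * μ3 * gain κ Tr t) * (Sig k t)^2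
          = -(2 * μ3 * κ / (Tr - t)) * (Sig k t)^2 := by
        rw [hgain]; ring
      calc f' ≤ -(2 * μ3 * gain κ Tr t) * (Sig k t)^2 := hle
        _ = -(2 * μ3 * κ / (Tr - t)) * (Sig k t)^2 := heq
  -- Step 2: Sig vanishes on [Tr, ∞)
  have hSigzero : ∀ k t, Tr ≤ t → Sig k t = 0 := by
    intro k t htTr
    -- deriv of Sig^2 is ≤ 0 whenever 0 ≤ t, t ≠ Tr, t ≠ T
    have hnonpos : ∀ u : ℝ, 0 ≤ u → u ≠ Tr → u ≠ T →
        ∃ f', HasDerivAt (fun τ => (Sig k τ)^2) f' u ∧ f' ≤ 0 := by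
      intro u hu hur hut
      obtain ⟨f', hf', hle⟩ := hSigSq u hu hur hut k
      refine ⟨f', hf', le_trans hle ?_⟩
      have hg := gain_nonneg (κ := κ) (T := Tr) (t := u) hκ0
      nlinarith [sq_nonneg (Sig k u), mul_nonneg hg (sq_nonneg (Sig k u))]
    have hanti1 : AntitoneOn (fun τ => (Sig k τ)^2) (Set.Icc Tr T) := by
      apply aux_antitone _ _ _ (((hSigc k).pow 2).continuousOn)
      intro u hu
      exact hnonpos u (by linarith [hu.1]) (ne_of_gt hu.1) (ne_of_lt hu.2)
    have h0 : (Sig k Tr)^2 = 0 := by rw [hSigTr k]; ring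
    have hSigT0 : (Sig k T)^2 = 0 := by
      have hle2 : Sig k T ^ 2 ≤ Sig k Tr ^ 2 :=
        hanti1 (Set.left_mem_Icc.mpr hTrT.le) (Set.right_mem_Icc.mpr hTrT.le) hTrT.le
      nlinarith [sq_nonneg (Sig k T)]
    rcases le_or_gt t T with hcase | hcase
    · have hle2 : Sig k t ^ 2 ≤ Sig k Tr ^ 2 :=
        hanti1 (Set.left_mem_Icc.mpr hTrT.le) ⟨htTr, hcase⟩ htTr
      have hz : (Sig k t)^2 = 0 := by nlinarith [sq_nonneg (Sig k t)]
      exact (pow_eq_zero_iff two_ne_zero).mp hz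
    · have hanti2 : AntitoneOn (fun τ => (Sig k τ)^2) (Set.Icc T t) := by
        apply aux_antitone _ _ _ (((hSigc k).pow 2).continuousOn)
        intro u hu
        exact hnonpos u (by linarith [hu.1]) (by linarith [hu.1, hTrT]) (ne_of_gt hu.1)
      have hle2 : Sig k t ^ 2 ≤ Sig k T ^ 2 :=
        hanti2 (Set.left_mem_Icc.mpr hcase.le) (Set.right_mem_Icc.mpr hcase.le) hcase.le
      have hz : (Sig k t)^2 = 0 := by nlinarith [sq_nonneg (Sig k t), hSigT0]
      exact (pow_eq_zero_iff two_ne_zero).mp hz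
  -- linear dynamics of x after Tr
  have hxlin : ∀ t : ℝ, Tr < t → t ≠ T → ∀ k,
      HasDerivAt (fun τ => x τ k)
        (-((ρ1 + ρ2 * gain κ T t) * ((sLap W).mulVec (x t)) k)) t := by
    intro t ht htt k
    have ht0 : (0:ℝ) ≤ t := by linarith
    have htr : t ≠ Tr := ne_of_gt ht
    have hx' := (hode t ht0 htr htt).2 k
    have hς' := hςk t ht0 htr htt k
    have hsum : HasDerivAt (Sig k)
        ((-(ρ1 + ρ2 * gain κ T t) * ((sLap W).mulVec (x t)) k - μ1 * s t k
          - (μ2 + μ3 * gain κ Tr t) * (x t k + ς t k) + d t k)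
          + (ρ1 + ρ2 * gain κ T t) * ((sLap W).mulVec (x t)) k) t := hx'.add hς'
    have hev : (Sig k) =ᶠ[nhds t] (fun _ => 0) := by
      filter_upwards [isOpen_Ioi.mem_nhds ht] with u hu
      exact hSigzero k u (le_of_lt hu)
    have hzero : HasDerivAt (Sig k) 0 t :=
      (hasDerivAt_const t 0).congr_of_eventuallyEq hev
    have huniq := hsum.unique hzero
    convert hx' using 1
    linarith [huniq]
  -- positive definite weighted quadratic form
  obtain ⟨p, c, hp, hc, hQ⟩ := aux_posdef (by omega) W hSC hunb
  haveI : NeZero N := ⟨by omega⟩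
  set Psum : ℝ := ∑ k, p k with hPsum
  have hPpos : 0 < Psum := Finset.sum_pos (fun k _ => hp k) ⟨⟨0, by omega⟩, Finset.mem_univ _⟩
  set V : ℝ → ℝ := fun t => ∑ k, p k * (x t k)^2 with hV
  have hVc : Continuous V :=
    continuous_finset_sum _ fun k _ => continuous_const.mul ((hxkc k).pow 2)
  have hV0 : ∀ t, 0 ≤ V t :=
    fun t => Finset.sum_nonneg fun k _ => mul_nonneg (hp k).le (sq_nonneg _)
  have hVle : ∀ t, V t ≤ Psum * ∑ k, (x t k)^2 := by
    intro t
    rw [hV, Finset.mul_sum]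
    apply Finset.sum_le_sum
    intro k _
    apply mul_le_mul_of_nonneg_right _ (sq_nonneg _)
    exact Finset.single_le_sum (fun j _ => (hp j).le) (Finset.mem_univ k)
  have hVderiv : ∀ t, Tr < t → t ≠ T → HasDerivAt V
      (-(2 * (ρ1 + ρ2 * gain κ T t)) * ∑ k, p k * x t k * ((sLap W).mulVec (x t)) k) t := by
    intro t ht htt
    have hterm : ∀ k : Fin N, HasDerivAt (fun τ => p k * (x τ k)^2)
        (p k * (2 * x t k ^ 1 * (-((ρ1 + ρ2 * gain κ T t) * ((sLap W).mulVec (x t)) k)))) t :=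
      fun k => ((hxlin t ht htt k).pow 2).const_mul (p k)
    have hs := HasDerivAt.fun_sum (fun k (_ : k ∈ Finset.univ) => hterm k)
    refine hs.congr_deriv ?_
    symm
    rw [Finset.mul_sum]
    exact Finset.sum_congr rfl fun k _ => by ring
  -- quadratic form lower bound in terms of V
  have hQV : ∀ t, (c / Psum) * V t ≤ ∑ k, p k * x t k * ((sLap W).mulVec (x t)) k := by
    intro t
    have h1 := hQ (x t)
    have h2 := hVle t
    have h3 : (c / Psum) * V t ≤ (c / Psum) * (Psum * ∑ k, (x t k)^2) :=
      mul_le_mul_of_nonneg_left h2 (by positivity)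
    calc (c / Psum) * V t ≤ (c / Psum) * (Psum * ∑ k, (x t k)^2) := h3
      _ = c * ∑ k, (x t k)^2 := by field_simp
      _ ≤ _ := h1
  -- prescribed-time convergence of V at T
  have hVT : V T = 0 := by
    set t0 : ℝ := (Tr + T)/2 with ht0def
    have ht0a : Tr < t0 := by rw [ht0def]; linarith
    have ht0b : t0 < T := by rw [ht0def]; linarith
    apply aux_gronwall_power V t0 T (2 * ρ2 * κ * (c / Psum)) ht0b (by positivity)
      (fun u _ => hV0 u) hVc.continuousOn
    intro u hu
    have huT : u < T := hu.2
    have huTr : Tr < u := lt_trans ht0a hu.1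
    have hu0 : (0:ℝ) ≤ u := by linarith
    refine ⟨_, hVderiv u huTr (ne_of_lt huT), ?_⟩
    have hgain : gain κ T u = κ / (T - u) := by
      unfold gain
      rw [if_pos ⟨hu0, huT⟩]
    have hTu : (0:ℝ) < T - u := by linarith
    have hgpos : 0 < gain κ T u := by rw [hgain]; positivity
    have hμpos : 0 < ρ1 + ρ2 * gain κ T u := by positivity
    have hqv := hQV u
    have hcv : 0 ≤ (c / Psum) * V u := mul_nonneg (by positivity) (hV0 u)
    -- chain of bounds
    have hb1 : -(2 * (ρ1 + ρ2 * gain κ T u)) * ∑ k, p k * x u k * ((sLap W).mulVec (x u)) k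
        ≤ -(2 * (ρ1 + ρ2 * gain κ T u)) * ((c / Psum) * V u) := by
      have h := mul_le_mul_of_nonneg_left (hQV u)
        (le_of_lt (by positivity : (0:ℝ) < 2 * (ρ1 + ρ2 * gain κ T u)))
      linarith
    have hb2 : -(2 * (ρ1 + ρ2 * gain κ T u)) * ((c / Psum) * V u)
        ≤ -(2 * (ρ2 * gain κ T u)) * ((c / Psum) * V u) := by
      nlinarith [hcv, hρ1]
    have hb3 : -(2 * (ρ2 * gain κ T u)) * ((c / Psum) * V u)
        = -(2 * ρ2 * κ * (c / Psum) / (T - u)) * V u := by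
      rw [hgain]
      field_simp
    linarith [hb1, hb2, hb3.le, hb3.ge]
  have hxT : ∀ k, x T k = 0 := by
    intro k
    have hterm := (Finset.sum_eq_zero_iff_of_nonneg
      (fun j (_ : j ∈ Finset.univ) => mul_nonneg (hp j).le (sq_nonneg (x T j)))).mp hVT k
      (Finset.mem_univ k)
    rcases mul_eq_zero.mp hterm with h | h
    · exact absurd h (ne_of_gt (hp k))
    · exact (pow_eq_zero_iff two_ne_zero).mp h
  -- after T : V is antitone
  intro t htT k
  rcases eq_or_lt_of_le htT with heq | hlt
  · rw [← heq]; exact hxT k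
  · have hanti : AntitoneOn V (Set.Icc T t) := by
      apply aux_antitone _ _ _ hVc.continuousOn
      intro u hu
      have huT : T < u := hu.1
      have huTr : Tr < u := lt_trans hTrT huT
      refine ⟨_, hVderiv u huTr (ne_of_gt huT), ?_⟩
      have hg := gain_nonneg (κ := κ) (T := T) (t := u) hκ0
      have hμpos : 0 < ρ1 + ρ2 * gain κ T u := by positivity
      have hqv := hQV u
      have hcv : 0 ≤ (c / Psum) * V u := mul_nonneg (by positivity) (hV0 u)
      nlinarith [hqv, hμpos, hcv]
    have hVt : V t ≤ 0 := by
      have := hanti (Set.left_mem_Icc.mpr hlt.le) (Set.right_mem_Icc.mpr hlt.le) hlt.le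
      rw [hVT] at this
      exact this
    have hVt0 : V t = 0 := le_antisymm hVt (hV0 t)
    have hterm := (Finset.sum_eq_zero_iff_of_nonneg
      (fun j (_ : j ∈ Finset.univ) => mul_nonneg (hp j).le (sq_nonneg (x t j)))).mp hVt0 k
      (Finset.mem_univ k)
    rcases mul_eq_zero.mp hterm with h | h
    · exact absurd h (ne_of_gt (hp k))
    · exact (pow_eq_zero_iff two_ne_zero).mp h
end

section
/- Suppose the digraph of W is quasi-strongly connected and the leader set 𝓛 admits no gauge (the subgraph among leaders is structurally unbalanced). Then for every closed-loop trajectory (x, ς, s) of the prescribed-time sliding mode protocol with data (ρ1, ρ2, T_r, T_s, μ1, μ2, μ3, δ, d), one has x t k = 0 for all nodes k and all t ≥ T_r + T_s (prescribed-time stability within the preassigned time T_r + T_s despite the disturbances). -/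
open Matrix

open Polynomial Set Filter

section Aux

lemma sLap_row {N : ℕ} (W : Matrix (Fin N) (Fin N) ℝ) (v : Fin N → ℝ) (k : Fin N) :
    (sLap W).mulVec v k = (∑ l, |W k l|) * v k - ∑ l, W k l * v l := by
  simp only [sLap, Matrix.sub_mulVec, Pi.sub_apply, Matrix.mulVec_diagonal]
  rfl

lemma sLap_nullspace {N : ℕ} (W : Matrix (Fin N) (Fin N) ℝ)
    (hQS : QuasiStronglyConnected W)
    (hunb : ¬ ∃ g : Fin N → ℝ, IsGauge W {k | IsLeader W k} g)
    (v : Fin N → ℝ) (hv : (sLap W).mulVec v = 0) : v = 0 := by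
  by_contra hne
  obtain ⟨r, hr⟩ := hQS
  have hNE : (Finset.univ : Finset (Fin N)).Nonempty := ⟨r, Finset.mem_univ r⟩
  set m := Finset.univ.sup' hNE (fun k => |v k|) with hm
  have hle : ∀ k, |v k| ≤ m := fun k => hm ▸ Finset.le_sup' (fun k => |v k|) (Finset.mem_univ k)
  have hmpos : 0 < m := by
    rcases Function.ne_iff.1 hne with ⟨k, hk⟩
    have h1 : 0 < |v k| := abs_pos.2 hk
    exact lt_of_lt_of_le h1 (hle k)
  have key : ∀ k, |v k| = m → ∀ l, W k l * (v k * v l) = |W k l| * m ^ 2 := by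
    intro k hk
    have hrow : (∑ l, |W k l|) * v k - ∑ l, W k l * v l = 0 := by
      rw [← sLap_row W v k, hv]; rfl
    have hsum : ∑ l, W k l * (v k * v l) = ∑ l, |W k l| * m ^ 2 := by
      have h1 : ∑ l, W k l * (v k * v l) = (∑ l, W k l * v l) * v k := by
        rw [Finset.sum_mul]; apply Finset.sum_congr rfl; intro l _; ring
      have h2 : (∑ l, W k l * v l) * v k = (∑ l, |W k l|) * v k * v k := by
        have := sub_eq_zero.1 hrow
        rw [← this]
      have h3 : v k * v k = m ^ 2 := by
        have : |v k| * |v k| = m * m := by rw [hk]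
        rw [abs_mul_abs_self] at this
        nlinarith
      calc ∑ l, W k l * (v k * v l) = (∑ l, W k l * v l) * v k := h1
        _ = (∑ l, |W k l|) * v k * v k := h2
        _ = ∑ l, |W k l| * m ^ 2 := by rw [mul_assoc, h3, Finset.sum_mul]
    have hterm : ∀ l ∈ Finset.univ, W k l * (v k * v l) ≤ |W k l| * m ^ 2 := by
      intro l _
      have h1 : W k l * (v k * v l) ≤ |W k l * (v k * v l)| := le_abs_self _
      have h2 : |W k l * (v k * v l)| = |W k l| * (|v k| * |v l|) := by
        rw [abs_mul, abs_mul]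
      have h3 : |v k| * |v l| ≤ m * m := by
        apply mul_le_mul (hle k) (hle l) (abs_nonneg _) hmpos.le
      nlinarith [abs_nonneg (W k l)]
    intro l
    exact (Finset.sum_eq_sum_iff_of_le hterm).1 hsum l (Finset.mem_univ l)
  have step : ∀ k, |v k| = m → ∀ l, W k l ≠ 0 → |v l| = m := by
    intro k hk l hW
    have h1 := key k hk l
    have h2 : |W k l| * m ^ 2 ≤ |W k l| * (m * |v l|) := by
      calc |W k l| * m ^ 2 = W k l * (v k * v l) := h1.symm
        _ ≤ |W k l * (v k * v l)| := le_abs_self _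
        _ = |W k l| * (|v k| * |v l|) := by rw [abs_mul, abs_mul]
        _ = |W k l| * (m * |v l|) := by rw [hk]
    have hWpos : 0 < |W k l| := abs_pos.2 hW
    have h4 : m ^ 2 ≤ m * |v l| := le_of_mul_le_mul_left (by linarith [h2]) hWpos
    have h5 : m ≤ |v l| := by nlinarith
    exact le_antisymm (hle l) h5
  have reach_step : ∀ j k, Reaches W j k → |v k| = m → |v j| = m := by
    intro j k h
    induction h with
    | refl => exact fun h => h
    | tail _ hbc ih => intro hk; exact ih (step _ hk _ hbc)
  obtain ⟨k0, _, hk0⟩ := Finset.exists_mem_eq_sup' hNE (fun k => |v k|)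
  have hrM : |v r| = m := reach_step r k0 (hr k0) hk0.symm
  have hLM : ∀ k, IsLeader W k → |v k| = m := by
    intro k hL
    exact reach_step k r (hL r (hr k)) hrM
  apply hunb
  refine ⟨fun k => v k / m, ?_, ?_⟩
  · intro k hk
    have h := hLM k hk
    rcases abs_eq hmpos.le |>.1 h with h1 | h1
    · left; show v k / m = 1; rw [h1]; field_simp
    · right; show v k / m = -1; rw [h1]; field_simp
  · intro k hk l _
    have hkm := hLM k hk
    have h1 := key k hkm l
    field_simp
    nlinarith [h1]

lemma charpoly_eval_eq_det {n : Type*} [Fintype n] [DecidableEq n] (A : Matrix n n ℂ) (μ : ℂ) :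
    A.charpoly.eval μ = (Matrix.diagonal (fun _ : n => μ) - A).det := by
  rw [Matrix.charpoly, ← Polynomial.coe_evalRingHom, RingHom.map_det]
  congr 1
  ext i j
  by_cases h : i = j
  · subst h; simp [Matrix.charmatrix_apply_eq, Matrix.diagonal_apply_eq]
  · simp [Matrix.charmatrix_apply_ne _ _ _ h, Matrix.diagonal_apply_ne _ h]

lemma root_exists_eigvec {n : Type*} [Fintype n] [DecidableEq n] (A : Matrix n n ℂ) (μ : ℂ)
    (h : A.charpoly.IsRoot μ) : ∃ u : n → ℂ, u ≠ 0 ∧ A.mulVec u = μ • u := by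
  have h1 : (Matrix.diagonal (fun _ : n => μ) - A).det = 0 := by
    rw [← charpoly_eval_eq_det]; exact h
  obtain ⟨u, hu, h3⟩ := (Matrix.exists_mulVec_eq_zero_iff).2 h1
  refine ⟨u, hu, ?_⟩
  rw [Matrix.sub_mulVec] at h3
  have h4 : (Matrix.diagonal (fun _ : n => μ)).mulVec u = μ • u := by
    ext k; simp [Matrix.mulVec_diagonal]
  rw [h4] at h3
  linear_combination (norm := module) -h3

lemma roots_re_pos {N : ℕ} (W : Matrix (Fin N) (Fin N) ℝ)
    (hnull : ∀ v : Fin N → ℝ, (sLap W).mulVec v = 0 → v = 0)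
    (μ : ℂ) (hμ : ((sLap W).map (fun r => (r : ℂ))).charpoly.IsRoot μ) : 0 < μ.re := by
  set A := sLap W with hA
  set Ac := A.map (fun r => (r : ℂ)) with hAc
  obtain ⟨u, hu, heig⟩ := root_exists_eigvec Ac μ hμ
  have hrow : ∀ k, (Ac.mulVec u) k = ∑ l, (A k l : ℂ) * u l := by
    intro k; simp [hAc, Matrix.mulVec, dotProduct, Matrix.map_apply]
  have hμ0 : μ ≠ 0 := by
    intro h0
    apply hu
    have hz : Ac.mulVec u = 0 := by rw [heig, h0, zero_smul]
    have hre : A.mulVec (fun k => (u k).re) = 0 := by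
      funext k
      have := congrFun hz k
      rw [hrow k] at this
      have h2 := congrArg Complex.re this
      simpa [Matrix.mulVec, dotProduct, Complex.re_sum] using h2
    have him : A.mulVec (fun k => (u k).im) = 0 := by
      funext k
      have := congrFun hz k
      rw [hrow k] at this
      have h2 := congrArg Complex.im this
      simpa [Matrix.mulVec, dotProduct, Complex.im_sum] using h2
    have h3 := hnull _ hre
    have h4 := hnull _ him
    funext k
    exact Complex.ext (congrFun h3 k) (congrFun h4 k)
  obtain ⟨k1, hk1'⟩ := Function.ne_iff.1 hu
  have hk1 : u k1 ≠ 0 := by simpa using hk1'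
  have hNE : (Finset.univ : Finset (Fin N)).Nonempty := ⟨k1, Finset.mem_univ k1⟩
  obtain ⟨k0, _, hk0⟩ := Finset.exists_mem_eq_sup' hNE (fun k => ‖u k‖)
  have hle : ∀ k, ‖u k‖ ≤ ‖u k0‖ := by
    intro k; rw [← hk0]; exact Finset.le_sup' (fun k => ‖u k‖) (Finset.mem_univ k)
  have hpos : 0 < ‖u k0‖ :=
    lt_of_lt_of_le (norm_pos_iff.2 hk1) (hle k1)
  set D := ∑ l, |W k0 l| with hD
  have hDnn : 0 ≤ D := Finset.sum_nonneg fun l _ => abs_nonneg _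
  have hrow0 : (μ - (D : ℂ)) * u k0 = -∑ l, ((W k0 l : ℂ)) * u l := by
    have h1 : (Ac.mulVec u) k0 = μ * u k0 := by rw [heig]; simp
    rw [hrow k0] at h1
    have h2 : ∑ l, (A k0 l : ℂ) * u l = (D : ℂ) * u k0 - ∑ l, ((W k0 l : ℂ)) * u l := by
      rw [hA]
      have : ∀ l, ((sLap W) k0 l : ℂ) * u l
          = ((Matrix.diagonal (fun k => ∑ l, |W k l|) : Matrix (Fin N) (Fin N) ℝ) k0 l : ℂ) * u l
            - ((W k0 l : ℂ)) * u l := by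
        intro l; simp [sLap, Matrix.sub_apply]; push_cast; ring
      rw [Finset.sum_congr rfl (fun l _ => this l), Finset.sum_sub_distrib]
      congr 1
      rw [Finset.sum_eq_single k0]
      · simp [Matrix.diagonal_apply_eq, hD]
      · intro b _ hb; simp [Matrix.diagonal_apply_ne _ (Ne.symm hb)]
      · intro hb; exact absurd (Finset.mem_univ k0) hb
    rw [h2] at h1
    linear_combination -h1
  have habs : ‖μ - (D : ℂ)‖ ≤ D := by
    have h1 : ‖μ - (D : ℂ)‖ * ‖u k0‖ ≤ D * ‖u k0‖ := by
      calc ‖μ - (D : ℂ)‖ * ‖u k0‖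
          = ‖(μ - (D : ℂ)) * u k0‖ := (norm_mul _ _).symm
        _ = ‖∑ l, ((W k0 l : ℂ)) * u l‖ := by rw [hrow0, norm_neg]
        _ ≤ ∑ l, ‖((W k0 l : ℂ)) * u l‖ := norm_sum_le _ _
        _ ≤ ∑ l, |W k0 l| * ‖u k0‖ := by
            apply Finset.sum_le_sum; intro l _
            rw [norm_mul, Complex.norm_real, Real.norm_eq_abs]
            exact mul_le_mul_of_nonneg_left (hle l) (abs_nonneg _)
        _ = D * ‖u k0‖ := by rw [← Finset.sum_mul]
    exact le_of_mul_le_mul_right h1 hpos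
  have hsq : (μ.re - D) ^ 2 + μ.im ^ 2 ≤ D ^ 2 := by
    have h1 : ‖μ - (D : ℂ)‖ ^ 2 ≤ D ^ 2 := by
      apply pow_le_pow_left₀ (norm_nonneg _) habs
    rw [Complex.sq_norm, Complex.normSq_apply] at h1
    simp only [Complex.sub_re, Complex.ofReal_re, Complex.sub_im, Complex.ofReal_im, sub_zero] at h1
    nlinarith [h1]
  have hnz : 0 < μ.re ^ 2 + μ.im ^ 2 := by
    have h2 := Complex.normSq_pos.2 hμ0
    rw [Complex.normSq_apply] at h2
    nlinarith [h2]
  nlinarith [hsq, hDnn, hnz]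

lemma prod_factors_eq_zero {n : Type*} [Fintype n] [DecidableEq n] (A : Matrix n n ℂ) :
    ((A.charpoly.roots.toList).map (fun μ => A - μ • (1 : Matrix n n ℂ))).prod = 0 := by
  have hsp : A.charpoly.Splits := IsAlgClosed.splits A.charpoly
  have hfac : A.charpoly = (A.charpoly.roots.map (fun a => X - C a)).prod :=
    hsp.eq_prod_roots_of_monic A.charpoly_monic
  have hlist : A.charpoly = ((A.charpoly.roots.toList).map (fun a => X - C a)).prod := by
    conv_lhs => rw [hfac]
    rw [← Multiset.coe_toList A.charpoly.roots, Multiset.map_coe, Multiset.prod_coe,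
      Multiset.coe_toList]
  have h0 : Polynomial.aeval A A.charpoly = 0 := Matrix.aeval_self_charpoly A
  rw [hlist, map_list_prod, List.map_map] at h0
  rw [← h0]
  congr 1
  apply List.map_congr_left
  intro μ _
  simp [Function.comp, map_sub, Polynomial.aeval_X, Polynomial.aeval_C,
    Algebra.algebraMap_eq_smul_one]

end Aux

section ODE

lemma scalar_decay {T t0 ρ1 ρ2 κ : ℝ} (ht0T : t0 < T) (ht0 : 0 ≤ t0)
    (hρ1 : 0 < ρ1) (hρ2 : 0 < ρ2) (hκ : 0 < κ) {μ : ℂ} (hμ : 0 < μ.re)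
    (u g : ℝ → ℂ) (c M : ℝ) (hc : 0 < c) (hM : 0 ≤ M)
    (hg : ∀ t ∈ Set.Ico t0 T, ‖g t‖ ≤ M * (T - t) ^ c)
    (hu : ∀ t ∈ Set.Ico t0 T,
      HasDerivAt u (((-(ρ1 + ρ2 * κ / (T - t)) : ℝ) : ℂ) * (μ * u t + g t)) t) :
    ∃ C, 0 ≤ C ∧ ∀ t ∈ Set.Ico t0 T,
      ‖u t‖ ≤ C * (T - t) ^ (min c (μ.re * ρ2 * κ / 2)) := by
  set a : ℝ := μ.re with ha
  set q : ℝ := a * ρ2 * κ with hqdef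
  have hq : 0 < q := by positivity
  set c' : ℝ := min c (q / 2) with hc'def
  have hc' : 0 < c' := lt_min hc (by positivity)
  have hc'c : c' ≤ c := min_le_left _ _
  have hc'q : c' < q := lt_of_le_of_lt (min_le_right _ _) (by linarith)
  set r : ℝ := q - c' with hrdef
  have hr : 0 < r := by simp only [hrdef]; linarith
  set φ : ℝ → ℝ := fun t => ρ1 + ρ2 * κ / (T - t) with hφdef
  set τ : ℝ → ℝ := fun t => ρ1 * t - ρ2 * κ * Real.log (T - t) with hτdef
  have hτ' : ∀ t ∈ Ico t0 T, HasDerivAt τ (φ t) t := by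
    intro t ht
    have hTt : 0 < T - t := sub_pos.2 ht.2
    have h1 : HasDerivAt (fun s => T - s) (-1 : ℝ) t := by
      exact (hasDerivAt_id' t).const_sub T
    have h2 : HasDerivAt (fun s => Real.log (T - s)) ((T - t)⁻¹ * (-1)) t :=
      (Real.hasDerivAt_log (ne_of_gt hTt)).comp t h1
    have h3 : HasDerivAt (fun s => ρ1 * s) ρ1 t := by
      simpa using (hasDerivAt_id t).const_mul ρ1
    have h4 := h3.sub (h2.const_mul (ρ2 * κ))
    refine h4.congr_deriv ?_
    simp only [hφdef]
    field_simp
    ring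
  set E : ℝ → ℂ := fun t => Complex.exp (μ * (τ t : ℂ)) with hEdef
  have hEne : ∀ t, E t ≠ 0 := fun t => Complex.exp_ne_zero _
  have hE' : ∀ t ∈ Ico t0 T, HasDerivAt E (μ * (φ t : ℂ) * E t) t := by
    intro t ht
    have h1 : HasDerivAt (fun s => μ * ((τ s : ℝ) : ℂ)) (μ * ((φ t : ℝ) : ℂ)) t :=
      ((hτ' t ht).ofReal_comp).const_mul μ
    have h2 := h1.cexp
    refine h2.congr_deriv ?_
    ring
  set v : ℝ → ℂ := fun t => E t * u t with hvdef
  have hv' : ∀ t ∈ Ico t0 T,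
      HasDerivAt v (((-(φ t) : ℝ) : ℂ) * (E t * g t)) t := by
    intro t ht
    have h1 := (hE' t ht).mul (hu t ht)
    refine h1.congr_deriv ?_
    simp only [hφdef]
    push_cast
    ring
  have hEabs : ∀ t ∈ Ico t0 T,
      ‖E t‖ = Real.exp (a * ρ1 * t) * (T - t) ^ (-q) := by
    intro t ht
    have hTt : 0 < T - t := sub_pos.2 ht.2
    rw [hEdef]
    simp only []
    rw [Complex.norm_exp]
    have h1 : (μ * ((τ t : ℝ) : ℂ)).re = a * τ t := by
      simp [Complex.mul_re, ha]
    rw [h1, hτdef]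
    simp only []
    have h2 : a * (ρ1 * t - ρ2 * κ * Real.log (T - t))
        = a * ρ1 * t + Real.log (T - t) * (-q) := by rw [hqdef]; ring
    rw [h2, Real.exp_add]
    congr 1
    rw [Real.rpow_def_of_pos hTt]
  set K1 : ℝ := ρ1 * (T - t0) + ρ2 * κ with hK1def
  have hTt0' : 0 < T - t0 := sub_pos.2 ht0T
  have hK1 : 0 < K1 := by positivity
  have hφbound : ∀ t ∈ Ico t0 T, 0 < φ t ∧ φ t ≤ K1 / (T - t) := by
    intro t ht
    have hTt : 0 < T - t := sub_pos.2 ht.2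
    constructor
    · have : 0 < ρ2 * κ / (T - t) := by positivity
      simp only [hφdef]; linarith
    · rw [hφdef, hK1def, le_div_iff₀ hTt]
      have h5 : T - t ≤ T - t0 := by linarith [ht.1]
      have h6 : (ρ1 + ρ2 * κ / (T - t)) * (T - t) = ρ1 * (T - t) + ρ2 * κ := by
        field_simp
      rw [h6]
      nlinarith [hTt]
  set K2 : ℝ := Real.exp (a * ρ1 * T) with hK2def
  set K : ℝ := K1 * K2 * M * (T - t0) ^ (c - c') with hKdef
  have hK : 0 ≤ K := by positivity
  have hvbound : ∀ t ∈ Ico t0 T,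
      ‖((-(φ t) : ℝ) : ℂ) * (E t * g t)‖ ≤ K * (T - t) ^ (c' - q - 1) := by
    intro t ht
    have hTt : 0 < T - t := sub_pos.2 ht.2
    have hTt0 : T - t ≤ T - t0 := by linarith [ht.1]
    rw [norm_mul, norm_mul, Complex.norm_real, Real.norm_eq_abs,
      abs_neg, abs_of_pos (hφbound t ht).1, hEabs t ht]
    have h1 : φ t * (Real.exp (a * ρ1 * t) * (T - t) ^ (-q) * ‖g t‖)
        ≤ (K1 / (T - t)) * (K2 * (T - t) ^ (-q) * (M * (T - t) ^ c)) := by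
      have e1 : Real.exp (a * ρ1 * t) ≤ K2 := by
        rw [hK2def]
        apply Real.exp_le_exp.2
        have h7 : t ≤ T := le_of_lt ht.2
        have h8 : 0 < a * ρ1 := mul_pos hμ hρ1
        nlinarith
      have e2 := hg t ht
      have p1 : (0:ℝ) ≤ (T - t) ^ (-q) := Real.rpow_nonneg hTt.le _
      have p2 : (0:ℝ) ≤ ‖g t‖ := norm_nonneg _
      have p3 : (0:ℝ) < K1 / (T - t) := by positivity
      have p4 : (0:ℝ) ≤ Real.exp (a * ρ1 * t) := Real.exp_nonneg _
      have := (hφbound t ht).2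
      apply mul_le_mul this _ (by positivity) (le_of_lt p3)
      calc Real.exp (a * ρ1 * t) * (T - t) ^ (-q) * ‖g t‖
          ≤ K2 * (T - t) ^ (-q) * ‖g t‖ := by
            apply mul_le_mul_of_nonneg_right (mul_le_mul_of_nonneg_right e1 p1) p2
        _ ≤ K2 * (T - t) ^ (-q) * (M * (T - t) ^ c) := by
            apply mul_le_mul_of_nonneg_left e2 (by positivity)
    calc φ t * (Real.exp (a * ρ1 * t) * (T - t) ^ (-q) * ‖g t‖)
        ≤ (K1 / (T - t)) * (K2 * (T - t) ^ (-q) * (M * (T - t) ^ c)) := h1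
      _ = K1 * K2 * M * ((T - t) ^ (-q) * (T - t) ^ c * (T - t)⁻¹) := by
          rw [div_eq_mul_inv]; ring
      _ = K1 * K2 * M * ((T - t) ^ (c - c') * (T - t) ^ (c' - q - 1)) := by
          congr 1
          rw [← Real.rpow_add hTt, ← Real.rpow_neg_one (T - t), ← Real.rpow_add hTt,
            ← Real.rpow_add hTt]
          congr 1; ring
      _ ≤ K1 * K2 * M * ((T - t0) ^ (c - c') * (T - t) ^ (c' - q - 1)) := by
          apply mul_le_mul_of_nonneg_left _ (by positivity)
          apply mul_le_mul_of_nonneg_right _ (Real.rpow_nonneg hTt.le _)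
          exact Real.rpow_le_rpow hTt.le hTt0 (by linarith)
      _ = K * (T - t) ^ (c' - q - 1) := by rw [hKdef]; ring
  set C0 : ℝ := ‖v t0‖ with hC0def
  set B : ℝ → ℝ := fun t => C0 + (K / r) * ((T - t) ^ (-r) - (T - t0) ^ (-r)) with hBdef
  have hB' : ∀ t ∈ Ico t0 T, HasDerivAt B (K * (T - t) ^ (c' - q - 1)) t := by
    intro t ht
    have hTt : 0 < T - t := sub_pos.2 ht.2
    have h1 : HasDerivAt (fun s => T - s) (-1 : ℝ) t := by
      exact (hasDerivAt_id' t).const_sub T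
    have h2 : HasDerivAt (fun s => (T - s) ^ (-r)) ((-1) * (-r) * (T - t) ^ (-r - 1)) t :=
      h1.rpow_const (Or.inl (ne_of_gt hTt))
    have h3 := ((h2.sub_const ((T - t0) ^ (-r))).const_mul (K / r)).const_add C0
    refine h3.congr_deriv ?_
    have : -r - 1 = c' - q - 1 := by rw [hrdef]; ring
    rw [this]
    field_simp
  have main : ∀ t ∈ Ico t0 T, ‖v t‖ ≤ B t := by
    intro t1 ht1
    have h := image_norm_le_of_norm_deriv_right_le_deriv_boundary'
      (f := v) (f' := fun t => ((-(φ t) : ℝ) : ℂ) * (E t * g t))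
      (a := t0) (b := t1)
      (B := B) (B' := fun t => K * (T - t) ^ (c' - q - 1))
      ?hcont ?hder ?hinit ?hBcont ?hBder ?hbound (right_mem_Icc.2 ht1.1)
    · exact h
    case hcont =>
      intro s hs
      have hs' : s ∈ Ico t0 T := ⟨hs.1, lt_of_le_of_lt hs.2 ht1.2⟩
      exact (hv' s hs').continuousAt.continuousWithinAt
    case hder =>
      intro s hs
      have hs' : s ∈ Ico t0 T := ⟨hs.1, lt_trans hs.2 ht1.2⟩
      exact (hv' s hs').hasDerivWithinAt
    case hinit =>
      rw [hBdef]; simp [hC0def]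
    case hBcont =>
      intro s hs
      have hs' : s ∈ Ico t0 T := ⟨hs.1, lt_of_le_of_lt hs.2 ht1.2⟩
      exact (hB' s hs').continuousAt.continuousWithinAt
    case hBder =>
      intro s hs
      have hs' : s ∈ Ico t0 T := ⟨hs.1, lt_trans hs.2 ht1.2⟩
      exact (hB' s hs').hasDerivWithinAt
    case hbound =>
      intro s hs
      have hs' : s ∈ Ico t0 T := ⟨hs.1, lt_trans hs.2 ht1.2⟩
      exact hvbound s hs'
  refine ⟨C0 * (T - t0) ^ r + K / r, by positivity, ?_⟩
  intro t ht
  have hTt : 0 < T - t := sub_pos.2 ht.2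
  have hTt0 : T - t ≤ T - t0 := by linarith [ht.1]
  have hC0 : 0 ≤ C0 := norm_nonneg _
  have h1 : ‖v t‖ ≤ C0 + (K / r) * (T - t) ^ (-r) := by
    have h2 := main t ht
    rw [hBdef] at h2
    have h3 : (0:ℝ) ≤ (K / r) * (T - t0) ^ (-r) := by positivity
    nlinarith [h2]
  have hPr : (0:ℝ) < (T - t) ^ r := Real.rpow_pos_of_pos hTt r
  have hPq : (T - t) ^ q = (T - t) ^ r * (T - t) ^ c' := by
    rw [← Real.rpow_add hTt]; congr 1; rw [hrdef]; ring
  have hPrinv : (T - t) ^ (-r) = ((T - t) ^ r)⁻¹ := Real.rpow_neg hTt.le r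
  have h4 : u t = v t * (E t)⁻¹ := by
    rw [hvdef]; simp only []
    rw [mul_comm (E t) (u t), mul_inv_cancel_right₀ (hEne t)]
  have hexp1 : (1:ℝ) ≤ Real.exp (a * ρ1 * t) := by
    rw [Real.one_le_exp_iff]
    have h0t : 0 ≤ t := le_trans ht0 ht.1
    positivity
  have h6 : (Real.exp (a * ρ1 * t))⁻¹ ≤ 1 := inv_le_one_of_one_le₀ hexp1
  have hEinv : (‖E t‖)⁻¹ = (Real.exp (a * ρ1 * t))⁻¹ * (T - t) ^ q := by
    rw [hEabs t ht, mul_inv, Real.rpow_neg hTt.le, inv_inv]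
  have h5 : ‖u t‖
      = ‖v t‖ * ((Real.exp (a * ρ1 * t))⁻¹ * (T - t) ^ q) := by
    rw [h4, norm_mul, norm_inv, hEinv]
  have hq0 : (0:ℝ) ≤ (T - t) ^ q := Real.rpow_nonneg hTt.le q
  have hc0 : (0:ℝ) ≤ (T - t) ^ c' := Real.rpow_nonneg hTt.le c'
  calc ‖u t‖
      = ‖v t‖ * ((Real.exp (a * ρ1 * t))⁻¹ * (T - t) ^ q) := h5
    _ ≤ ‖v t‖ * (1 * (T - t) ^ q) := by
        apply mul_le_mul_of_nonneg_left _ (norm_nonneg _)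
        exact mul_le_mul_of_nonneg_right h6 hq0
    _ = ‖v t‖ * (T - t) ^ q := by ring
    _ ≤ (C0 + K / r * ((T - t) ^ r)⁻¹) * (T - t) ^ q := by
        apply mul_le_mul_of_nonneg_right _ hq0
        rw [← hPrinv]; exact h1
    _ = C0 * (T - t) ^ r * (T - t) ^ c'
        + K / r * (((T - t) ^ r)⁻¹ * (T - t) ^ r) * (T - t) ^ c' := by
        rw [hPq]; ring
    _ = C0 * (T - t) ^ r * (T - t) ^ c' + K / r * (T - t) ^ c' := by
        rw [inv_mul_cancel₀ (ne_of_gt hPr)]; ring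
    _ ≤ C0 * (T - t0) ^ r * (T - t) ^ c' + K / r * (T - t) ^ c' := by
        apply add_le_add_left
        apply mul_le_mul_of_nonneg_right _ hc0
        exact mul_le_mul_of_nonneg_left (Real.rpow_le_rpow hTt.le hTt0 hr.le) hC0
    _ = (C0 * (T - t0) ^ r + K / r) * (T - t) ^ c' := by ring

lemma key_decay {N : ℕ} (A : Matrix (Fin N) (Fin N) ℂ) {T t0 ρ1 ρ2 κ : ℝ}
    (ht0T : t0 < T) (ht0 : 0 ≤ t0) (hρ1 : 0 < ρ1) (hρ2 : 0 < ρ2) (hκ : 0 < κ) :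
    ∀ ℓ : List ℂ, (∀ μ ∈ ℓ, 0 < μ.re) →
      ∀ v : ℝ → Fin N → ℂ,
      (∀ t ∈ Set.Ico t0 T, ∀ k, HasDerivAt (fun τ => v τ k)
          (((-(ρ1 + ρ2 * κ / (T - t)) : ℝ) : ℂ) * (A.mulVec (v t)) k) t) →
      (∀ t ∈ Set.Ico t0 T,
        ((ℓ.map (fun μ => A - μ • (1 : Matrix (Fin N) (Fin N) ℂ))).prod).mulVec (v t) = 0) →
      ∃ C c : ℝ, 0 < c ∧ 0 ≤ C ∧
        ∀ t ∈ Set.Ico t0 T, ∀ k, ‖v t k‖ ≤ C * (T - t) ^ c := by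
  intro ℓ
  induction ℓ with
  | nil =>
    intro _ v _ hker
    refine ⟨0, 1, one_pos, le_refl 0, ?_⟩
    intro t ht k
    have h1 := congrFun (hker t ht) k
    simp only [List.map_nil, List.prod_nil, Matrix.one_mulVec] at h1
    rw [h1]
    simp
  | cons μ ℓ' ih =>
    intro hre v hv hker
    have hμre : 0 < μ.re := hre μ (List.mem_cons_self)
    have hre' : ∀ ν ∈ ℓ', 0 < ν.re := fun ν hν => hre ν (List.mem_cons_of_mem μ hν)
    set P := A - μ • (1 : Matrix (Fin N) (Fin N) ℂ) with hP
    set w : ℝ → Fin N → ℂ := fun t => P.mulVec (v t) with hw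
    have hFcomm : ∀ ν : ℂ, Commute P (A - ν • (1 : Matrix (Fin N) (Fin N) ℂ)) := by
      intro ν
      rw [hP]
      have h1 : Commute A A := Commute.refl A
      have h2 : Commute A (ν • (1 : Matrix (Fin N) (Fin N) ℂ)) :=
        (Commute.one_right A).smul_right ν
      have h3 : Commute (μ • (1 : Matrix (Fin N) (Fin N) ℂ)) A :=
        (Commute.one_left A).smul_left μ
      have h4 : Commute (μ • (1 : Matrix (Fin N) (Fin N) ℂ)) (ν • (1 : Matrix (Fin N) (Fin N) ℂ)) :=
        ((Commute.refl (1 : Matrix (Fin N) (Fin N) ℂ)).smul_left μ).smul_right ν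
      exact (h1.sub_right h2).sub_left (h3.sub_right h4)
    have hcommA : P * A = A * P := by
      have h := hFcomm 0
      simp only [zero_smul, sub_zero] at h
      exact h.eq
    have hw' : ∀ t ∈ Set.Ico t0 T, ∀ k, HasDerivAt (fun τ => w τ k)
        (((-(ρ1 + ρ2 * κ / (T - t)) : ℝ) : ℂ) * (A.mulVec (w t)) k) t := by
      intro t ht k
      have h2 : HasDerivAt (fun τ => ∑ l, P k l * v τ l)
          (∑ l, P k l * (((-(ρ1 + ρ2 * κ / (T - t)) : ℝ) : ℂ) * (A.mulVec (v t)) l)) t :=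
        HasDerivAt.fun_sum (fun l _ => (hv t ht l).const_mul (P k l))
      have h3 : (fun τ => w τ k) = fun τ => ∑ l, P k l * v τ l := by
        funext τ; simp [hw, Matrix.mulVec, dotProduct]
      rw [h3]
      refine h2.congr_deriv ?_
      have h4 : (A.mulVec (w t)) k = ∑ l, P k l * (A.mulVec (v t)) l := by
        rw [hw]; simp only []
        rw [Matrix.mulVec_mulVec, ← hcommA, ← Matrix.mulVec_mulVec]
        simp [Matrix.mulVec, dotProduct]
      rw [h4, Finset.mul_sum]
      apply Finset.sum_congr rfl
      intro l _
      ring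
    have hwker : ∀ t ∈ Set.Ico t0 T,
        ((ℓ'.map (fun ν => A - ν • (1 : Matrix (Fin N) (Fin N) ℂ))).prod).mulVec (w t) = 0 := by
      intro t ht
      have hcop : Commute P ((ℓ'.map (fun ν => A - ν • (1 : Matrix (Fin N) (Fin N) ℂ))).prod) := by
        apply Commute.list_prod_right
        intro y hy
        obtain ⟨ν, _, rfl⟩ := List.mem_map.1 hy
        exact hFcomm ν
      rw [hw]; simp only []
      rw [Matrix.mulVec_mulVec, ← hcop.eq, ← Matrix.mulVec_mulVec]
      have := hker t ht
      rw [List.map_cons, List.prod_cons] at this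
      rw [← Matrix.mulVec_mulVec] at this
      have h5 : (ℓ'.map (fun ν => A - ν • (1 : Matrix (Fin N) (Fin N) ℂ))).prod.mulVec (v t)
          = P.mulVec ((ℓ'.map (fun ν => A - ν • (1 : Matrix (Fin N) (Fin N) ℂ))).prod.mulVec (v t)) →
          True := fun _ => trivial
      -- this : P.mulVec (prod.mulVec (v t)) = 0
      exact this
    obtain ⟨C, c, hc, hC, hbound⟩ := ih hre' w hw' hwker
    have hker2 : ∀ t ∈ Set.Ico t0 T, ∀ k,
        (A.mulVec (v t)) k = μ * v t k + w t k := by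
      intro t ht k
      have : A = P + μ • (1 : Matrix (Fin N) (Fin N) ℂ) := by rw [hP]; abel
      rw [this, Matrix.add_mulVec, Matrix.smul_mulVec, Matrix.one_mulVec]
      simp [hw]
      ring
    have hsc : ∀ k : Fin N, ∃ Ck, 0 ≤ Ck ∧ ∀ t ∈ Set.Ico t0 T,
        ‖v t k‖ ≤ Ck * (T - t) ^ (min c (μ.re * ρ2 * κ / 2)) := by
      intro k
      apply scalar_decay ht0T ht0 hρ1 hρ2 hκ hμre (fun t => v t k) (fun t => w t k) c C hc hC
      · intro t ht; exact hbound t ht k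
      · intro t ht
        have h6 := hv t ht k
        refine h6.congr_deriv ?_
        rw [hker2 t ht k]
    choose Cf hCf0 hCf using hsc
    refine ⟨∑ k, Cf k, min c (μ.re * ρ2 * κ / 2), lt_min hc (by positivity), Finset.sum_nonneg (fun k _ => hCf0 k), ?_⟩
    intro t ht k
    have h7 := hCf k t ht
    have h8 : Cf k ≤ ∑ j, Cf j :=
      Finset.single_le_sum (fun j _ => hCf0 j) (Finset.mem_univ k)
    have h9 : (0:ℝ) ≤ (T - t) ^ (min c (μ.re * ρ2 * κ / 2)) :=
      Real.rpow_nonneg (by linarith [ht.2]) _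
    calc ‖v t k‖ ≤ Cf k * (T - t) ^ (min c (μ.re * ρ2 * κ / 2)) := h7
      _ ≤ (∑ j, Cf j) * (T - t) ^ (min c (μ.re * ρ2 * κ / 2)) :=
          mul_le_mul_of_nonneg_right h8 h9

end ODE

set_option maxHeartbeats 2000000 in
theorem smc_prescribed_time_stability_quasi_unbalanced_leaders
    {N : ℕ} (hN : 2 ≤ N) (W : Matrix (Fin N) (Fin N) ℝ)
    (hdiag : ∀ k, W k k = 0)
    (hQS : QuasiStronglyConnected W)
    (hunb : ¬ ∃ g : Fin N → ℝ, IsGauge W {k | IsLeader W k} g)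
    (κ ρ1 ρ2 Tr Ts μ1 μ2 μ3 δ : ℝ) (hκ : 2 < κ)
    (hρ1 : 0 < ρ1) (hρ2 : 0 < ρ2) (hTr : 0 < Tr) (hTs : 0 < Ts)
    (hμ2 : 0 < μ2) (hμ3 : 0 < μ3) (hδ : 0 ≤ δ) (hμ1 : δ < μ1)
    (d : ℝ → Fin N → ℝ) (hd : ∀ t : ℝ, 0 ≤ t → ∀ k, |d t k| ≤ δ)
    (x ς s : ℝ → Fin N → ℝ)
    (htraj : SMCTraj W κ ρ1 ρ2 Tr Ts μ1 μ2 μ3 d x ς s) :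
    ∀ t : ℝ, Tr + Ts ≤ t → ∀ k, x t k = 0 := by
  obtain ⟨hxc, hςc, hsel, hode⟩ := htraj
  have hκ0 : (0:ℝ) < κ := by linarith
  set T : ℝ := Tr + Ts with hTdef
  have hTrT : Tr < T := by rw [hTdef]; linarith
  have hT0 : (0:ℝ) < T := by linarith
  have hgain_lt : ∀ {S t : ℝ}, 0 ≤ t → t < S → gain κ S t = κ / (S - t) := by
    intro S t h1 h2; rw [gain, if_pos ⟨h1, h2⟩]
  have hgain_ge : ∀ {S t : ℝ}, S ≤ t → gain κ S t = 0 := by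
    intro S t h1; rw [gain, if_neg]; rintro ⟨h2, h3⟩; linarith
  have hgain_nonneg : ∀ S t : ℝ, 0 ≤ gain κ S t := by
    intro S t
    rw [gain]
    split
    · rename_i h
      have h3 : 0 < S - t := sub_pos.2 h.2
      positivity
    · exact le_refl 0
  set σ : ℝ → Fin N → ℝ := fun t k => x t k + ς t k with hσdef
  have hσc : ∀ k, Continuous fun t => σ t k := fun k =>
    ((continuous_apply k).comp hxc).add ((continuous_apply k).comp hςc)
  have hσ' : ∀ (k : Fin N) (t : ℝ), 0 ≤ t → t ≠ Tr → t ≠ T → HasDerivAt (fun τ => σ τ k)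
      (-μ1 * s t k - (μ2 + μ3 * gain κ Tr t) * σ t k + d t k) t := by
    intro k t h0 h1 h2
    obtain ⟨hg1, hg2⟩ := hode t h0 h1 h2
    have h3 := (hg2 k).add (hasDerivAt_pi.1 hg1 k)
    refine h3.congr_deriv ?_
    simp only [hσdef, Pi.smul_apply, smul_eq_mul]
    ring
  -- Part A : the sliding variable vanishes from time Tr on
  have hσTr : ∀ (k : Fin N) (t : ℝ), Tr ≤ t → σ t k = 0 := by
    intro k
    set p : ℝ := 2 * μ3 * κ with hpdef
    have hp : 0 < p := by positivity
    set y : ℝ → ℝ := fun τ => (σ τ k) ^ 2 with hydef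
    have hyc : Continuous y := (hσc k).pow 2
    have hynn : ∀ τ, 0 ≤ y τ := fun τ => sq_nonneg _
    have hy' : ∀ (τ : ℝ), 0 ≤ τ → τ ≠ Tr → τ ≠ T → HasDerivAt y
        (2 * σ τ k * (-μ1 * s τ k - (μ2 + μ3 * gain κ Tr τ) * σ τ k + d τ k)) τ := by
      intro τ h0 h1 h2
      have h3 := (hσ' k τ h0 h1 h2).pow 2
      refine h3.congr_deriv ?_
      push_cast
      ring
    have hyineq : ∀ (τ : ℝ), 0 ≤ τ →
        2 * σ τ k * (-μ1 * s τ k - (μ2 + μ3 * gain κ Tr τ) * σ τ k + d τ k)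
          ≤ -(2 * (μ2 + μ3 * gain κ Tr τ)) * y τ := by
      intro τ h0
      have hdk := hd τ h0 k
      have hss : s τ k * σ τ k = |σ τ k| := by
        simp only [hσdef]; exact (hsel τ k).2
      have habs1 : σ τ k * d τ k ≤ |σ τ k| * δ := by
        calc σ τ k * d τ k ≤ |σ τ k * d τ k| := le_abs_self _
          _ = |σ τ k| * |d τ k| := abs_mul _ _
          _ ≤ |σ τ k| * δ := mul_le_mul_of_nonneg_left hdk (abs_nonneg _)
      have h5 : 0 ≤ |σ τ k| := abs_nonneg _
      simp only [hydef]
      nlinarith [habs1, hss, h5, mul_nonneg (sub_pos.2 hμ1).le h5]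
    -- A1 : decaying bound on [0, Tr)
    have hbound1 : ∀ (b : ℝ), 0 ≤ b → b < Tr →
        y b * (Tr - b) ^ (-p) ≤ y 0 * Tr ^ (-p) := by
      intro b h0 hbTr
      rcases eq_or_lt_of_le h0 with heq | hb0
      · rw [← heq, sub_zero]
      · have hG : ∀ ξ, 0 ≤ ξ → ξ < Tr → HasDerivAt (fun τ => y τ * (Tr - τ) ^ (-p))
            ((2 * σ ξ k * (-μ1 * s ξ k - (μ2 + μ3 * gain κ Tr ξ) * σ ξ k + d ξ k))
              * (Tr - ξ) ^ (-p) + y ξ * ((-1) * (-p) * (Tr - ξ) ^ (-p - 1))) ξ := by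
          intro ξ h1 h2
          have hTξ : 0 < Tr - ξ := sub_pos.2 h2
          have h3 : HasDerivAt (fun τ : ℝ => Tr - τ) (-1) ξ := by
            exact (hasDerivAt_id' ξ).const_sub Tr
          have h4 : HasDerivAt (fun τ => (Tr - τ) ^ (-p)) ((-1) * (-p) * (Tr - ξ) ^ (-p - 1)) ξ :=
            h3.rpow_const (Or.inl (ne_of_gt hTξ))
          exact (hy' ξ h1 (ne_of_lt h2) (ne_of_lt (lt_trans h2 hTrT))).mul h4
        have hmono : AntitoneOn (fun τ => y τ * (Tr - τ) ^ (-p)) (Icc 0 b) := by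
          apply antitoneOn_of_deriv_nonpos (convex_Icc 0 b)
          · intro ξ hξ
            exact (hG ξ hξ.1 (lt_of_le_of_lt hξ.2 hbTr)).continuousAt.continuousWithinAt
          · intro ξ hξ
            rw [interior_Icc] at hξ
            exact ((hG ξ hξ.1.le (lt_trans hξ.2 hbTr)).differentiableAt).differentiableWithinAt
          · intro ξ hξ
            rw [interior_Icc] at hξ
            have h1 : 0 ≤ ξ := hξ.1.le
            have h2 : ξ < Tr := lt_trans hξ.2 hbTr
            have hTξ : 0 < Tr - ξ := sub_pos.2 h2
            rw [(hG ξ h1 h2).deriv]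
            have hgainval : gain κ Tr ξ = κ / (Tr - ξ) := hgain_lt h1 h2
            have e1 : gain κ Tr ξ * (Tr - ξ) = κ := by
              rw [hgainval]; field_simp
            have hP1 : (Tr - ξ) ^ (-p) = (Tr - ξ) ^ (-p - 1) * (Tr - ξ) := by
              rw [← Real.rpow_add_one (ne_of_gt hTξ)]
              congr 1; ring
            have hDq : (0:ℝ) ≤ (Tr - ξ) ^ (-p - 1) := Real.rpow_nonneg hTξ.le _
            have h6 := mul_le_mul_of_nonneg_right (hyineq ξ h1)
              (Real.rpow_nonneg hTξ.le (-p))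
            have hyξ := hynn ξ
            have hb : (-(2 * (μ2 + μ3 * gain κ Tr ξ)) * y ξ) * (Tr - ξ) ^ (-p)
                + y ξ * (-1 * -p * (Tr - ξ) ^ (-p - 1))
                = -(2 * μ2 * y ξ * ((Tr - ξ) ^ (-p - 1)) * (Tr - ξ)) := by
              linear_combination (-(2 * (μ2 + μ3 * gain κ Tr ξ)) * y ξ) * hP1
                + (-2 * μ3 * y ξ * ((Tr - ξ) ^ (-p - 1))) * e1
                + (y ξ * ((Tr - ξ) ^ (-p - 1))) * hpdef
            have hstep := add_le_add_left h6 (y ξ * (-1 * -p * (Tr - ξ) ^ (-p - 1)))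
            rw [hb] at hstep
            have hnn : 0 ≤ 2 * μ2 * y ξ * ((Tr - ξ) ^ (-p - 1)) * (Tr - ξ) := by
              have := mul_nonneg (mul_nonneg (mul_nonneg (by linarith : (0:ℝ) ≤ 2 * μ2) hyξ) hDq) hTξ.le
              linarith [this]
            linarith [hstep, hnn]
        have := hmono (left_mem_Icc.2 h0) (right_mem_Icc.2 h0) h0
        simpa using this
    -- A2 : y Tr = 0
    have hyTr : y Tr = 0 := by
      have hlim1 : Filter.Tendsto y (nhdsWithin Tr (Iio Tr)) (nhds (y Tr)) :=
        (hyc.tendsto Tr).mono_left nhdsWithin_le_nhds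
      have hlim2 : Filter.Tendsto (fun τ => (y 0 * Tr ^ (-p)) * (Tr - τ) ^ p)
          (nhdsWithin Tr (Iio Tr)) (nhds 0) := by
        have h1 : Filter.Tendsto (fun τ : ℝ => Tr - τ) (nhdsWithin Tr (Iio Tr)) (nhds 0) := by
          have h0 : Filter.Tendsto (fun τ : ℝ => Tr - τ) (nhds Tr) (nhds (Tr - Tr)) :=
            (continuous_const.sub continuous_id).tendsto Tr
          rw [sub_self] at h0
          exact h0.mono_left nhdsWithin_le_nhds
        have h3 : ContinuousAt (fun z : ℝ => z ^ p) 0 :=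
          Real.continuousAt_rpow_const 0 p (Or.inr hp.le)
        have h2 := h3.tendsto.comp h1
        rw [Real.zero_rpow (ne_of_gt hp)] at h2
        have h4 := h2.const_mul (y 0 * Tr ^ (-p))
        simpa using h4
      have hev : ∀ᶠ τ in nhdsWithin Tr (Iio Tr),
          y τ ≤ (y 0 * Tr ^ (-p)) * (Tr - τ) ^ p := by
        have hmem : Ioo 0 Tr ∈ nhdsWithin Tr (Iio Tr) :=
          Ioo_mem_nhdsLT_of_mem ⟨hTr, le_refl Tr⟩
        filter_upwards [hmem] with τ hτ
        have hb := hbound1 τ hτ.1.le hτ.2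
        have hS : 0 < Tr - τ := sub_pos.2 hτ.2
        calc y τ = y τ * (Tr - τ) ^ (-p) * (Tr - τ) ^ p := by
              rw [mul_assoc, ← Real.rpow_add hS]
              simp
          _ ≤ (y 0 * Tr ^ (-p)) * (Tr - τ) ^ p :=
              mul_le_mul_of_nonneg_right hb (Real.rpow_nonneg hS.le _)
      have hle0 : y Tr ≤ 0 := le_of_tendsto_of_tendsto hlim1 hlim2 hev
      exact le_antisymm hle0 (hynn Tr)
    -- A3 : y is nonincreasing after Tr (away from T)
    have hanti : ∀ a b : ℝ, Tr ≤ a → a < b → (∀ ξ ∈ Ioo a b, ξ ≠ T) → y b ≤ y a := by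
      intro a b hTa hab hneT
      have hmono : AntitoneOn y (Icc a b) := by
        apply antitoneOn_of_deriv_nonpos (convex_Icc a b)
        · exact hyc.continuousOn
        · intro ξ hξ
          rw [interior_Icc] at hξ
          exact ((hy' ξ (by linarith [hξ.1]) (by linarith [hξ.1]) (hneT ξ hξ)).differentiableAt).differentiableWithinAt
        · intro ξ hξ
          rw [interior_Icc] at hξ
          have h0 : (0:ℝ) ≤ ξ := by linarith [hξ.1]
          have hdy := hy' ξ h0 (by linarith [hξ.1]) (hneT ξ hξ)
          rw [hdy.deriv]
          have hineq := hyineq ξ h0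
          have hg0 := hgain_nonneg Tr ξ
          have hcy : 0 ≤ (2 * (μ2 + μ3 * gain κ Tr ξ)) * y ξ :=
            mul_nonneg (by nlinarith [mul_nonneg hμ3.le hg0] : (0:ℝ) ≤ 2 * (μ2 + μ3 * gain κ Tr ξ)) (hynn ξ)
          linarith [hineq, hcy]
      exact hmono (left_mem_Icc.2 hab.le) (right_mem_Icc.2 hab.le) hab.le
    intro t htTr
    have hyT : y T = 0 := by
      have h1 : y T ≤ y Tr := hanti Tr T (le_refl Tr) hTrT (fun ξ hξ => ne_of_lt hξ.2)
      rw [hyTr] at h1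
      exact le_antisymm h1 (hynn T)
    have hyt : y t = 0 := by
      rcases lt_trichotomy t T with hlt | heq | hgt
      · rcases eq_or_lt_of_le htTr with heq2 | h2
        · rw [← heq2]; exact hyTr
        · have h1 : y t ≤ y Tr := hanti Tr t (le_refl Tr) h2
            (fun ξ hξ => ne_of_lt (lt_trans hξ.2 hlt))
          rw [hyTr] at h1
          exact le_antisymm h1 (hynn t)
      · rw [heq]; exact hyT
      · have h1 : y t ≤ y T := hanti T t (le_of_lt hTrT) hgt (fun ξ hξ => ne_of_gt hξ.1)
        rw [hyT] at h1
        exact le_antisymm h1 (hynn t)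
    exact sq_eq_zero_iff.1 hyt
  -- Part B : after Tr the state follows the nominal protocol
  have hxode : ∀ (t : ℝ), Tr < t → t ≠ T → ∀ k, HasDerivAt (fun τ => x τ k)
      (-(ρ1 + ρ2 * gain κ T t) * ((sLap W).mulVec (x t)) k) t := by
    intro t ht hne k
    have h0 : (0:ℝ) ≤ t := le_of_lt (lt_trans hTr ht)
    have hx := (hode t h0 (ne_of_gt ht) hne).2 k
    have hev : (fun τ => σ τ k) =ᶠ[nhds t] (fun _ => (0:ℝ)) := by
      filter_upwards [Ioi_mem_nhds ht] with τ hτ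
      exact hσTr k τ (le_of_lt hτ)
    have hconst : HasDerivAt (fun τ => σ τ k) 0 t :=
      (hasDerivAt_const t (0:ℝ)).congr_of_eventuallyEq hev
    have h2 := (hσ' k t h0 (ne_of_gt ht) hne).unique hconst
    have h3 : σ t k = 0 := hσTr k t ht.le
    simp only [hσdef] at h2 h3
    refine hx.congr_deriv ?_
    rw [h3] at h2 ⊢
    linarith [h2]
  -- Part C : prescribed-time convergence at T
  set Ac := (sLap W).map (fun r => (r : ℂ)) with hAcdef
  have hnull := sLap_nullspace W hQS hunb
  set ℓ := Ac.charpoly.roots.toList with hldef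
  have hroots : ∀ μ ∈ ℓ, 0 < μ.re := by
    intro μ hμmem
    apply roots_re_pos W hnull μ
    have h1 : μ ∈ Ac.charpoly.roots := by rwa [hldef, Multiset.mem_toList] at hμmem
    exact (Polynomial.mem_roots'.1 h1).2
  set t0 : ℝ := (Tr + T) / 2 with ht0def
  have ht0a : Tr < t0 := by rw [ht0def]; linarith
  have ht0b : t0 < T := by rw [ht0def]; linarith
  have ht00 : (0:ℝ) ≤ t0 := by linarith
  have hvder : ∀ t ∈ Ico t0 T, ∀ k, HasDerivAt (fun τ => ((x τ k : ℝ) : ℂ))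
      (((-(ρ1 + ρ2 * κ / (T - t)) : ℝ) : ℂ) * (Ac.mulVec (fun j => ((x t j : ℝ) : ℂ))) k) t := by
    intro t htI k
    have h1 := hxode t (lt_of_lt_of_le ht0a htI.1) (ne_of_lt htI.2) k
    have h2 := h1.ofReal_comp
    refine h2.congr_deriv ?_
    rw [hgain_lt (by linarith [htI.1] : (0:ℝ) ≤ t) htI.2]
    rw [hAcdef]
    simp only [Matrix.mulVec, dotProduct, Matrix.map_apply]
    push_cast
    ring
  have hker : ∀ t ∈ Ico t0 T,
      ((ℓ.map (fun μ => Ac - μ • (1 : Matrix (Fin N) (Fin N) ℂ))).prod).mulVec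
        (fun j => ((x t j : ℝ) : ℂ)) = 0 := by
    intro t _
    rw [hldef, prod_factors_eq_zero Ac, Matrix.zero_mulVec]
  obtain ⟨C, c, hcpos, hC0, hbd⟩ := key_decay Ac ht0b ht00 hρ1 hρ2 hκ0 ℓ hroots
    (fun t j => ((x t j : ℝ) : ℂ)) hvder hker
  have hxT : ∀ k, x T k = 0 := by
    intro k
    have hlim1 : Filter.Tendsto (fun t => |x t k|) (nhdsWithin T (Iio T)) (nhds (|x T k|)) :=
      (((continuous_apply k).comp hxc).abs.tendsto T).mono_left nhdsWithin_le_nhds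
    have hlim2 : Filter.Tendsto (fun t => C * (T - t) ^ c) (nhdsWithin T (Iio T)) (nhds 0) := by
      have h1 : Filter.Tendsto (fun t : ℝ => T - t) (nhdsWithin T (Iio T)) (nhds 0) := by
        have h0 : Filter.Tendsto (fun t : ℝ => T - t) (nhds T) (nhds (T - T)) :=
          (continuous_const.sub continuous_id).tendsto T
        rw [sub_self] at h0
        exact h0.mono_left nhdsWithin_le_nhds
      have h3 : ContinuousAt (fun z : ℝ => z ^ c) 0 :=
        Real.continuousAt_rpow_const 0 c (Or.inr hcpos.le)
      have h2 := h3.tendsto.comp h1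
      rw [Real.zero_rpow (ne_of_gt hcpos)] at h2
      have h4 := h2.const_mul C
      simpa using h4
    have hev : ∀ᶠ t in nhdsWithin T (Iio T), |x t k| ≤ C * (T - t) ^ c := by
      have hmem : Ioo t0 T ∈ nhdsWithin T (Iio T) :=
        Ioo_mem_nhdsLT_of_mem ⟨ht0b, le_refl T⟩
      filter_upwards [hmem] with t htm
      have := hbd t ⟨htm.1.le, htm.2⟩ k
      rwa [Complex.norm_real, Real.norm_eq_abs] at this
    have h1 : |x T k| ≤ 0 := le_of_tendsto_of_tendsto hlim1 hlim2 hev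
    exact abs_eq_zero.1 (le_antisymm h1 (abs_nonneg _))
  have hxTvec : x T = 0 := funext hxT
  -- Part D : the state stays at the origin after T
  set CL : ℝ := ∑ k, ∑ l, |sLap W k l| with hCLdef
  have hCL0 : 0 ≤ CL := Finset.sum_nonneg fun k _ => Finset.sum_nonneg fun l _ => abs_nonneg _
  have hCLb : ∀ (v : Fin N → ℝ), ‖(sLap W).mulVec v‖ ≤ CL * ‖v‖ := by
    intro v
    rw [pi_norm_le_iff_of_nonneg (by positivity)]
    intro k
    rw [Real.norm_eq_abs]
    have hrw : (sLap W).mulVec v k = ∑ l, sLap W k l * v l := rfl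
    rw [hrw]
    calc |∑ l, sLap W k l * v l| ≤ ∑ l, |sLap W k l * v l| := Finset.abs_sum_le_sum_abs _ _
      _ ≤ ∑ l, |sLap W k l| * ‖v‖ := by
          apply Finset.sum_le_sum; intro l _
          rw [abs_mul]
          apply mul_le_mul_of_nonneg_left _ (abs_nonneg _)
          have := norm_le_pi_norm v l
          rwa [Real.norm_eq_abs] at this
      _ = (∑ l, |sLap W k l|) * ‖v‖ := (Finset.sum_mul _ _ _).symm
      _ ≤ CL * ‖v‖ := by
          apply mul_le_mul_of_nonneg_right _ (norm_nonneg v)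
          rw [hCLdef]
          exact Finset.single_le_sum (f := fun j => ∑ l, |sLap W j l|)
            (fun j _ => Finset.sum_nonneg fun l _ => abs_nonneg _) (Finset.mem_univ k)
  intro t htT k
  rcases eq_or_lt_of_le htT with heq | hgt
  · rw [← heq]; exact hxT k
  · have hnorm : ‖x t‖ ≤ 0 := by
      have key : ∀ a, T < a → a ≤ t → ‖x t‖ ≤ ‖x a‖ * Real.exp (ρ1 * CL * (t - T)) := by
        intro a ha hat
        have hder : ∀ τ ∈ Ico a t,
            HasDerivWithinAt x ((fun ξ => (-ρ1) • ((sLap W).mulVec (x ξ))) τ) (Ici τ) τ := by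
          intro τ hτ
          have hTτ : T < τ := lt_of_lt_of_le ha hτ.1
          have h1 : ∀ j, HasDerivAt (fun ξ => x ξ j)
              (-(ρ1 + ρ2 * gain κ T τ) * ((sLap W).mulVec (x τ)) j) τ :=
            hxode τ (lt_trans hTrT hTτ) (ne_of_gt hTτ)
          have h2 : HasDerivAt x
              (fun j => -(ρ1 + ρ2 * gain κ T τ) * ((sLap W).mulVec (x τ)) j) τ :=
            hasDerivAt_pi.2 h1
          have h3 : gain κ T τ = 0 := hgain_ge (le_of_lt hTτ)
          have h4 : (fun j => -(ρ1 + ρ2 * gain κ T τ) * ((sLap W).mulVec (x τ)) j)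
              = (-ρ1) • ((sLap W).mulVec (x τ)) := by
            funext j
            rw [h3]
            simp only [Pi.smul_apply, smul_eq_mul]
            ring
          rw [h4] at h2
          exact h2.hasDerivWithinAt
        have hbnd : ∀ τ ∈ Ico a t,
            ‖(-ρ1) • ((sLap W).mulVec (x τ))‖ ≤ ρ1 * CL * ‖x τ‖ + 0 := by
          intro τ _
          rw [norm_smul, add_zero, Real.norm_eq_abs, abs_neg, abs_of_pos hρ1]
          calc ρ1 * ‖(sLap W).mulVec (x τ)‖ ≤ ρ1 * (CL * ‖x τ‖) :=
              mul_le_mul_of_nonneg_left (hCLb (x τ)) hρ1.le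
            _ = ρ1 * CL * ‖x τ‖ := by ring
        have hg := norm_le_gronwallBound_of_norm_deriv_right_le
          (hxc.continuousOn) hder (le_refl ‖x a‖) hbnd
        have h4 := hg t (right_mem_Icc.2 hat)
        rw [gronwallBound_ε0] at h4
        calc ‖x t‖ ≤ ‖x a‖ * Real.exp (ρ1 * CL * (t - a)) := h4
          _ ≤ ‖x a‖ * Real.exp (ρ1 * CL * (t - T)) := by
              apply mul_le_mul_of_nonneg_left _ (norm_nonneg _)
              apply Real.exp_le_exp.2
              have h5 : T ≤ a := ha.le
              nlinarith [mul_nonneg hρ1.le hCL0]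
      have hlim : Filter.Tendsto (fun a => ‖x a‖ * Real.exp (ρ1 * CL * (t - T)))
          (nhdsWithin T (Ioi T)) (nhds 0) := by
        have h1 : Filter.Tendsto (fun a => ‖x a‖) (nhds T) (nhds ‖x T‖) :=
          (hxc.norm.tendsto T)
        rw [hxTvec, norm_zero] at h1
        have h2 := h1.mul_const (Real.exp (ρ1 * CL * (t - T)))
        rw [zero_mul] at h2
        exact h2.mono_left nhdsWithin_le_nhds
      apply ge_of_tendsto hlim
      filter_upwards [Ioc_mem_nhdsGT_of_mem ⟨le_refl T, hgt⟩] with a haa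
      exact key a haa.1 haa.2
    have h6 := norm_le_zero_iff.1 hnorm
    exact congrFun h6 k
end
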